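/- arXiv:1302.0935 — 5 statements merged into one kernel-verified Lean document; each statement's English description precedes it below -/
import Mathlib

section
/- Let d ≥ 1, let β₂ ≥ 0 and K ≥ 0, and let σ₁ : ℝ^d → ℝ^d be K-Lipschitz and β₂-dissipative. Let b ≥ 0 and c ≥ 0 with c·K < 1. If for every ζ ∈ ℝ^d the equation z = ζ + b·σ₁(z) has a unique solution z ∈ ℝ^d, then for every ζ ∈ ℝ^d the equation z = ζ + (b + c)·σ₁(z) also has a unique solution z ∈ ℝ^d. -/
open RealInnerProductSpace

/-- **Continuation step in the proof of Proposition 4.1.** Let `d ≥ 1`, `β₂ ≥ 0`, `K ≥ 0` and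
let `σ₁ : ℝ^d → ℝ^d` be `K`-Lipschitz and `β₂`-dissipative.  Let `b, c ≥ 0` with `c * K < 1`.
If for every `ζ` the equation `z = ζ + b • σ₁ z` has a unique solution, then for every `ζ`
the equation `z = ζ + (b + c) • σ₁ z` also has a unique solution. -/
theorem algebraic_equation_continuation_step
    (d : ℕ) (hd : 1 ≤ d) (β₂ K : ℝ) (hβ₂ : 0 ≤ β₂) (hK : 0 ≤ K)
    (σ₁ : EuclideanSpace ℝ (Fin d) → EuclideanSpace ℝ (Fin d))
    (hLip : ∀ z z' : EuclideanSpace ℝ (Fin d), ‖σ₁ z - σ₁ z'‖ ≤ K * ‖z - z'‖)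
    (hDiss : ∀ z z' : EuclideanSpace ℝ (Fin d),
      ⟪σ₁ z - σ₁ z', z - z'⟫ ≤ -β₂ * ‖z - z'‖ ^ 2)
    (b c : ℝ) (hb : 0 ≤ b) (hc : 0 ≤ c) (hcK : c * K < 1)
    (hsol : ∀ ζ : EuclideanSpace ℝ (Fin d),
      ∃! z : EuclideanSpace ℝ (Fin d), z = ζ + b • σ₁ z) :
    ∀ ζ : EuclideanSpace ℝ (Fin d),
      ∃! z : EuclideanSpace ℝ (Fin d), z = ζ + (b + c) • σ₁ z := by
  intro ζ
  -- The solution map S for the parameter b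
  set S : EuclideanSpace ℝ (Fin d) → EuclideanSpace ℝ (Fin d) :=
    fun η => (hsol η).choose with hS
  have hSeq : ∀ η, S η = η + b • σ₁ (S η) := fun η => (hsol η).choose_spec.1
  -- S is 1-Lipschitz, by dissipativity
  have hSlip : ∀ η η', ‖S η - S η'‖ ≤ ‖η - η'‖ := by
    intro η η'
    have h1 : S η - S η' = (η - η') + b • (σ₁ (S η) - σ₁ (S η')) := by
      nth_rewrite 1 [hSeq η]
      nth_rewrite 1 [hSeq η']
      module
    have h2 : ‖S η - S η'‖ ^ 2 = ⟪η - η', S η - S η'⟫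
        + b * ⟪σ₁ (S η) - σ₁ (S η'), S η - S η'⟫ := by
      rw [← real_inner_self_eq_norm_sq]
      nth_rewrite 1 [h1]
      rw [inner_add_left, real_inner_smul_left]
    have hin : ⟪σ₁ (S η) - σ₁ (S η'), S η - S η'⟫ ≤ 0 := by
      have h := hDiss (S η) (S η')
      have h0 : -β₂ * ‖S η - S η'‖ ^ 2 ≤ 0 :=
        mul_nonpos_of_nonpos_of_nonneg (by linarith) (sq_nonneg _)
      linarith
    have h3 : b * ⟪σ₁ (S η) - σ₁ (S η'), S η - S η'⟫ ≤ 0 := by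
      have := mul_nonneg hb (neg_nonneg.2 hin); linarith
    have h4 : ⟪η - η', S η - S η'⟫ ≤ ‖η - η'‖ * ‖S η - S η'‖ :=
      real_inner_le_norm _ _
    nlinarith [norm_nonneg (S η - S η'), norm_nonneg (η - η')]
  -- The contraction map T
  set T : EuclideanSpace ℝ (Fin d) → EuclideanSpace ℝ (Fin d) :=
    fun z => S (ζ + c • σ₁ z) with hT
  have hTcon : ContractingWith ⟨c * K, by positivity⟩ T := by
    constructor
    · exact_mod_cast hcK
    · apply LipschitzWith.of_dist_le_mul
      intro z z'
      simp only [dist_eq_norm, hT]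
      calc ‖S (ζ + c • σ₁ z) - S (ζ + c • σ₁ z')‖
          ≤ ‖(ζ + c • σ₁ z) - (ζ + c • σ₁ z')‖ := hSlip _ _
        _ = c * ‖σ₁ z - σ₁ z'‖ := by
            rw [show (ζ + c • σ₁ z) - (ζ + c • σ₁ z') = c • (σ₁ z - σ₁ z') by module,
              norm_smul, Real.norm_of_nonneg hc]
        _ ≤ c * (K * ‖z - z'‖) := mul_le_mul_of_nonneg_left (hLip z z') hc
        _ = ↑(⟨c * K, by positivity⟩ : NNReal) * ‖z - z'‖ := by push_cast; ring
  obtain ⟨z₀, hz₀, -⟩ := hTcon.exists_fixedPoint (x := 0) (edist_ne_top _ _)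
  have hfix : S (ζ + c • σ₁ z₀) = z₀ := hz₀
  have h1 : z₀ = ζ + c • σ₁ z₀ + b • σ₁ z₀ := by
    conv_lhs => rw [← hfix]
    rw [hSeq, hfix]
  have hz₀' : z₀ = ζ + (b + c) • σ₁ z₀ :=
    h1.trans (by module)
  refine ⟨z₀, hz₀', ?_⟩
  intro y hy
  have hd1 : y - z₀ = (b + c) • (σ₁ y - σ₁ z₀) := by
    nth_rewrite 1 [hy]
    nth_rewrite 1 [hz₀']
    module
  have h2 : ‖y - z₀‖ ^ 2 = (b + c) * ⟪σ₁ y - σ₁ z₀, y - z₀⟫ := by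
    rw [← real_inner_self_eq_norm_sq]
    nth_rewrite 1 [hd1]
    rw [real_inner_smul_left]
  have hin : ⟪σ₁ y - σ₁ z₀, y - z₀⟫ ≤ 0 := by
    have h := hDiss y z₀
    have h0 : -β₂ * ‖y - z₀‖ ^ 2 ≤ 0 :=
      mul_nonpos_of_nonpos_of_nonneg (by linarith) (sq_nonneg _)
    linarith
  have hbc : 0 ≤ b + c := by linarith
  have h4 : ‖y - z₀‖ ^ 2 ≤ 0 := by
    have := mul_nonneg hbc (neg_nonneg.2 hin); linarith
  have h5 : ‖y - z₀‖ = 0 := by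
    have := sq_nonneg ‖y - z₀‖
    have : ‖y - z₀‖ ^ 2 = 0 := le_antisymm h4 this
    exact pow_eq_zero_iff (by norm_num) |>.mp this
  exact sub_eq_zero.mp (norm_eq_zero.mp h5)
end

section
/- In the algebraic-equation setting, for every (s, x̄, y, ζ) ∈ [0,T]×ℝⁿ×ℝ×ℝ^d there exists a unique z ∈ ℝ^d satisfying z = ζ + D_xφ(s,x̄)·σ(s, x̄, y + φ(s,x̄), z); denote this unique solution by h(s,x̄,y,ζ). Moreover there exists a constant C, depending only on K, L, M, β₂, T and sup_{s∈[0,T]}|φ(s,0)|, such that for all s ∈ [0,T], x̄ ∈ ℝⁿ, y, y' ∈ ℝ and ζ, ζ' ∈ ℝ^d: |h(s,x̄,y,ζ) − h(s,x̄,y',ζ')| ≤ C(|y − y'| + |ζ − ζ'|) and |h(s,x̄,y,ζ)| ≤ C(1 + |x̄| + |y| + |ζ|). -/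
open RealInnerProductSpace

set_option maxHeartbeats 1000000

lemma aux_exists_unique {E : Type*} [NormedAddCommGroup E] [InnerProductSpace ℝ E]
    [CompleteSpace E] (f : E → E) (K' : ℝ)
    (hLip : ∀ z z', ‖f z - f z'‖ ≤ K' * ‖z - z'‖)
    (hDiss : ∀ z z', ⟪f z - f z', z - z'⟫ ≤ 0)
    (ζ : E) : ∃ z : E, (z = ζ + f z) ∧ ∀ z', z' = ζ + f z' → z' = z := by
  have : Nonempty E := ⟨0⟩
  set θ : ℝ := 1 / (1 + K' ^ 2) with hθdef
  have hθpos : 0 < θ := by positivity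
  have hθle : θ ≤ 1 := by
    rw [hθdef, div_le_one (by positivity)]
    nlinarith [sq_nonneg K']
  have hθmul : θ * (1 + K' ^ 2) = 1 := by
    rw [hθdef]; field_simp
  set c : ℝ := Real.sqrt (1 - θ) with hcdef
  have hc0 : 0 ≤ c := Real.sqrt_nonneg _
  have hc1 : c < 1 := by
    rw [hcdef]
    calc Real.sqrt (1 - θ) < Real.sqrt 1 := by
          apply Real.sqrt_lt_sqrt (by linarith) (by linarith)
      _ = 1 := Real.sqrt_one
  set Φ : E → E := fun z => z - θ • (z - f z - ζ) with hΦdef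
  have hΦ : ∀ z z', dist (Φ z) (Φ z') ≤ c * dist z z' := by
    intro z z'
    rw [dist_eq_norm, dist_eq_norm]
    have hdec : Φ z - Φ z' = (1 - θ) • (z - z') + θ • (f z - f z') := by
      simp only [hΦdef]; module
    have hθ2 : θ ^ 2 * (1 + K' ^ 2) = θ := by
      rw [pow_two, mul_assoc, hθmul, mul_one]
    have hsq : ‖Φ z - Φ z'‖ ^ 2 ≤ (1 - θ) * ‖z - z'‖ ^ 2 := by
      rw [hdec, norm_add_sq_real]
      have h1 : ‖(1 - θ) • (z - z')‖ ^ 2 = (1 - θ) ^ 2 * ‖z - z'‖ ^ 2 := by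
        rw [norm_smul, Real.norm_eq_abs, abs_of_nonneg (by linarith : (0:ℝ) ≤ 1 - θ)]
        ring
      have h2 : ⟪(1 - θ) • (z - z'), θ • (f z - f z')⟫ ≤ 0 := by
        rw [real_inner_smul_left, real_inner_smul_right]
        have hd := hDiss z z'
        have hcomm : ⟪z - z', f z - f z'⟫ = ⟪f z - f z', z - z'⟫ := real_inner_comm _ _
        nlinarith [mul_nonneg (by linarith : (0:ℝ) ≤ 1 - θ) hθpos.le]
      have h3 : ‖θ • (f z - f z')‖ ^ 2 ≤ θ ^ 2 * K' ^ 2 * ‖z - z'‖ ^ 2 := by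
        rw [norm_smul, Real.norm_eq_abs, abs_of_nonneg hθpos.le]
        nlinarith [mul_self_le_mul_self (norm_nonneg (f z - f z')) (hLip z z'),
          sq_nonneg θ, norm_nonneg (z - z'), norm_nonneg (f z - f z')]
      nlinarith [sq_nonneg ‖z - z'‖]
    calc ‖Φ z - Φ z'‖ = Real.sqrt (‖Φ z - Φ z'‖ ^ 2) := (Real.sqrt_sq (norm_nonneg _)).symm
      _ ≤ Real.sqrt ((1 - θ) * ‖z - z'‖ ^ 2) := Real.sqrt_le_sqrt hsq
      _ = c * ‖z - z'‖ := by
          rw [Real.sqrt_mul (by linarith), Real.sqrt_sq (norm_nonneg _)]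
  have hlipΦ : LipschitzWith (Real.toNNReal c) Φ :=
    LipschitzWith.of_dist_le_mul (fun z z' => by
      rw [Real.coe_toNNReal c hc0]; exact hΦ z z')
  have hcontr : ContractingWith (Real.toNNReal c) Φ := by
    refine ⟨?_, hlipΦ⟩
    rw [← NNReal.coe_lt_coe, Real.coe_toNNReal c hc0, NNReal.coe_one]
    exact hc1
  set z₀ := ContractingWith.fixedPoint Φ hcontr with hz₀def
  have hfix : Φ z₀ = z₀ := hcontr.fixedPoint_isFixedPt
  have heq : z₀ = ζ + f z₀ := by
    have h0 : θ • (z₀ - f z₀ - ζ) = 0 := by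
      have h := hfix
      simp only [hΦdef] at h
      have := sub_eq_self.mp h
      exact this
    have h1 : z₀ - f z₀ - ζ = 0 := by
      rcases smul_eq_zero.mp h0 with h | h
      · exact absurd h hθpos.ne'
      · exact h
    have h2 : z₀ - (ζ + f z₀) = 0 := by rw [← h1]; abel
    exact sub_eq_zero.mp h2
  refine ⟨z₀, heq, ?_⟩
  intro z' hz'
  have hdiff : z' - z₀ = f z' - f z₀ := by
    conv_lhs => rw [hz', heq]
    abel
  have hn2 : ‖z' - z₀‖ ^ 2 ≤ 0 := by
    rw [← real_inner_self_eq_norm_sq]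
    nth_rewrite 1 [hdiff]
    exact hDiss z' z₀
  have : ‖z' - z₀‖ = 0 := by nlinarith [norm_nonneg (z' - z₀)]
  exact sub_eq_zero.mp (norm_eq_zero.mp this)

/-- **Proposition 4.1 (Representation Theorem for the algebraic equation).**
In the algebraic-equation setting, for every `(s, x̄, y, ζ) ∈ [0,T] × ℝⁿ × ℝ × ℝ^d` there is a
unique `z` with `z = ζ + D_xφ(s,x̄) · σ(s, x̄, y + φ(s,x̄), z)`; writing `h(s,x̄,y,ζ)` for this
solution, `h` is Lipschitz in `(y, ζ)` and of linear growth, with a constant `C` depending only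
on the data.  Dimensions `n ≥ 1` and `d ≥ 1` are encoded as `n + 1` and `d + 1`; the matrix `σ`
is encoded through its rows `σ t x y z i ∈ ℝ^d`, its first row being `σ t x y z 0`. -/
theorem representation_theorem_algebraic_equation
    (n d : ℕ) (T K L M β₂ : ℝ)
    (hT : 0 < T) (hK : 0 ≤ K) (hL : 0 ≤ L) (hM : 0 ≤ M) (hβ₂ : 0 < β₂)
    (σ : ℝ → EuclideanSpace ℝ (Fin (n + 1)) → ℝ → EuclideanSpace ℝ (Fin (d + 1)) →
      Fin (n + 1) → EuclideanSpace ℝ (Fin (d + 1)))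
    (φ : ℝ → EuclideanSpace ℝ (Fin (n + 1)) → ℝ)
    (hσLip : ∀ t ∈ Set.Icc (0 : ℝ) T, ∀ x x' y y' z z',
      ‖σ t x y z - σ t x' y' z'‖ ≤ K * (‖x - x'‖ + |y - y'| + ‖z - z'‖))
    (hσGrowth : ∀ t ∈ Set.Icc (0 : ℝ) T, ∀ x y z,
      ‖σ t x y z‖ ≤ L * (1 + ‖x‖ + |y| + ‖z‖))
    (hσ₁Diss : ∀ t ∈ Set.Icc (0 : ℝ) T, ∀ x y z z',
      ⟪σ t x y z 0 - σ t x y z' 0, z - z'⟫ ≤ -β₂ * ‖z - z'‖ ^ 2)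
    (hφ : ContDiff ℝ 3 (fun p : ℝ × EuclideanSpace ℝ (Fin (n + 1)) => φ p.1 p.2))
    (hφBound : ∀ i : ℕ, 1 ≤ i → i ≤ 3 →
      ∀ p : ℝ × EuclideanSpace ℝ (Fin (n + 1)),
        ‖iteratedFDeriv ℝ i (fun q : ℝ × EuclideanSpace ℝ (Fin (n + 1)) => φ q.1 q.2) p‖ ≤ M)
    (hφMono : ∀ s ∈ Set.Icc (0 : ℝ) T, ∀ x : EuclideanSpace ℝ (Fin (n + 1)),
      0 ≤ fderiv ℝ (φ s) x (EuclideanSpace.single 0 1) ∧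
      ∀ i : Fin (n + 1), i ≠ 0 → fderiv ℝ (φ s) x (EuclideanSpace.single i 1) = 0) :
    ∃ h : ℝ → EuclideanSpace ℝ (Fin (n + 1)) → ℝ → EuclideanSpace ℝ (Fin (d + 1)) →
        EuclideanSpace ℝ (Fin (d + 1)),
      (∀ s ∈ Set.Icc (0 : ℝ) T, ∀ x y ζ,
        (h s x y ζ = ζ + ∑ i : Fin (n + 1),
          fderiv ℝ (φ s) x (EuclideanSpace.single i 1) •
            σ s x (y + φ s x) (h s x y ζ) i) ∧
        (∀ z, z = ζ + ∑ i : Fin (n + 1),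
          fderiv ℝ (φ s) x (EuclideanSpace.single i 1) • σ s x (y + φ s x) z i →
            z = h s x y ζ)) ∧
      ∃ C : ℝ, 0 < C ∧ ∀ s ∈ Set.Icc (0 : ℝ) T, ∀ x y y' ζ ζ',
        ‖h s x y ζ - h s x y' ζ'‖ ≤ C * (|y - y'| + ‖ζ - ζ'‖) ∧
        ‖h s x y ζ‖ ≤ C * (1 + ‖x‖ + |y| + ‖ζ‖) := by
  classical
  -- abbreviation for the relevant derivative coefficient
  have key : ∀ s x y ζ, s ∈ Set.Icc (0 : ℝ) T →
      ∃ z, (z = ζ + fderiv ℝ (φ s) x (EuclideanSpace.single 0 1) • σ s x (y + φ s x) z 0) ∧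
        ∀ z', z' = ζ + fderiv ℝ (φ s) x (EuclideanSpace.single 0 1) • σ s x (y + φ s x) z' 0 →
          z' = z := by
    intro s x y ζ hs
    have hA : 0 ≤ fderiv ℝ (φ s) x (EuclideanSpace.single 0 1) := (hφMono s hs x).1
    refine aux_exists_unique
      (fun z => fderiv ℝ (φ s) x (EuclideanSpace.single 0 1) • σ s x (y + φ s x) z 0)
      (fderiv ℝ (φ s) x (EuclideanSpace.single 0 1) * K) ?_ ?_ ζ
    · intro z z'
      rw [← smul_sub, norm_smul, Real.norm_eq_abs, abs_of_nonneg hA, mul_assoc]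
      refine mul_le_mul_of_nonneg_left ?_ hA
      have h1 : ‖(σ s x (y + φ s x) z - σ s x (y + φ s x) z') 0‖
          ≤ ‖σ s x (y + φ s x) z - σ s x (y + φ s x) z'‖ := norm_le_pi_norm _ 0
      simp only [Pi.sub_apply] at h1
      have h2 := hσLip s hs x x (y + φ s x) (y + φ s x) z z'
      simp only [sub_self, norm_zero, abs_zero] at h2
      calc ‖σ s x (y + φ s x) z 0 - σ s x (y + φ s x) z' 0‖
          ≤ ‖σ s x (y + φ s x) z - σ s x (y + φ s x) z'‖ := h1
        _ ≤ K * (0 + 0 + ‖z - z'‖) := h2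
        _ = K * ‖z - z'‖ := by ring
    · intro z z'
      rw [← smul_sub, real_inner_smul_left]
      have hd := hσ₁Diss s hs x (y + φ s x) z z'
      nlinarith [mul_le_mul_of_nonneg_left hd hA,
        mul_nonneg (mul_nonneg hA hβ₂.le) (sq_nonneg ‖z - z'‖)]
  choose! h hfix huniq using key
  -- φ has linear growth
  have hφdiff : Differentiable ℝ (fun p : ℝ × EuclideanSpace ℝ (Fin (n + 1)) => φ p.1 p.2) :=
    hφ.differentiable (by norm_num)
  have hfd : ∀ p : ℝ × EuclideanSpace ℝ (Fin (n + 1)),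
      ‖fderiv ℝ (fun q : ℝ × EuclideanSpace ℝ (Fin (n + 1)) => φ q.1 q.2) p‖ ≤ M := by
    intro p
    have h1 := hφBound 1 le_rfl (by norm_num) p
    calc ‖fderiv ℝ (fun q : ℝ × EuclideanSpace ℝ (Fin (n + 1)) => φ q.1 q.2) p‖
        = ‖iteratedFDeriv ℝ 0
            (fderiv ℝ (fun q : ℝ × EuclideanSpace ℝ (Fin (n + 1)) => φ q.1 q.2)) p‖ := by
          rw [norm_iteratedFDeriv_zero]
      _ = ‖iteratedFDeriv ℝ (0 + 1) (fun q : ℝ × EuclideanSpace ℝ (Fin (n + 1)) => φ q.1 q.2) p‖ :=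
          norm_iteratedFDeriv_fderiv
      _ ≤ M := h1
  have hφlin : ∀ s ∈ Set.Icc (0 : ℝ) T, ∀ x, |φ s x| ≤ |φ 0 0| + M * (T + ‖x‖) := by
    intro s hs x
    have h2 : ‖(fun p : ℝ × EuclideanSpace ℝ (Fin (n + 1)) => φ p.1 p.2) (s, x)
          - (fun p : ℝ × EuclideanSpace ℝ (Fin (n + 1)) => φ p.1 p.2) (0, 0)‖
        ≤ M * ‖((s, x) : ℝ × EuclideanSpace ℝ (Fin (n + 1))) - (0, 0)‖ :=
      Convex.norm_image_sub_le_of_norm_fderiv_le (fun p _ => (hφdiff p))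
        (fun p _ => hfd p) convex_univ (Set.mem_univ _) (Set.mem_univ _)
    simp only at h2
    have h3 : ‖((s, x) : ℝ × EuclideanSpace ℝ (Fin (n + 1))) - (0, 0)‖ ≤ T + ‖x‖ := by
      have he : ((s, x) : ℝ × EuclideanSpace ℝ (Fin (n + 1))) - (0, 0) = (s, x) := by simp
      rw [he, Prod.norm_def]
      apply max_le
      · simp only [Real.norm_eq_abs]
        rw [abs_of_nonneg hs.1]
        linarith [hs.2, norm_nonneg x]
      · linarith [hT]
    have h4 : |φ s x - φ 0 0| ≤ M * (T + ‖x‖) := by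
      calc |φ s x - φ 0 0| = ‖φ s x - φ 0 0‖ := (Real.norm_eq_abs _).symm
        _ ≤ M * ‖((s, x) : ℝ × EuclideanSpace ℝ (Fin (n + 1))) - (0, 0)‖ := h2
        _ ≤ M * (T + ‖x‖) := mul_le_mul_of_nonneg_left h3 hM
    calc |φ s x| = |φ 0 0 + (φ s x - φ 0 0)| := by ring_nf
      _ ≤ |φ 0 0| + |φ s x - φ 0 0| := abs_add_le _ _
      _ ≤ |φ 0 0| + M * (T + ‖x‖) := by linarith
  refine ⟨h, ?_, ?_⟩
  · intro s hs x y ζ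
    have hsum : ∀ z : EuclideanSpace ℝ (Fin (d + 1)),
        (∑ i : Fin (n + 1), fderiv ℝ (φ s) x (EuclideanSpace.single i 1) • σ s x (y + φ s x) z i)
        = fderiv ℝ (φ s) x (EuclideanSpace.single 0 1) • σ s x (y + φ s x) z 0 := by
      intro z
      exact Finset.sum_eq_single 0
        (fun i _ hi => by rw [(hφMono s hs x).2 i hi, zero_smul])
        (fun habs => absurd (Finset.mem_univ 0) habs)
    constructor
    · rw [hsum]
      exact hfix s x y ζ hs
    · intro z hz
      rw [hsum] at hz
      exact huniq s x y ζ hs z hz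
  · set k := K / β₂ with hkdef
    set l := L / β₂ with hldef
    have hk0 : 0 ≤ k := div_nonneg hK hβ₂.le
    have hl0 : 0 ≤ l := div_nonneg hL hβ₂.le
    have hKk : K = k * β₂ := by rw [hkdef]; field_simp
    have hLl : L = l * β₂ := by rw [hldef]; field_simp
    have hP : (0:ℝ) ≤ 1 + |φ 0 0| + M * T + M := by positivity
    refine ⟨1 + k + l * (1 + |φ 0 0| + M * T + M), ?_, ?_⟩
    · nlinarith [mul_nonneg hl0 hP]
    intro s hs x y y' ζ ζ'
    have hA : 0 ≤ fderiv ℝ (φ s) x (EuclideanSpace.single 0 1) := (hφMono s hs x).1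
    set a := fderiv ℝ (φ s) x (EuclideanSpace.single 0 1) with hadef
    constructor
    · -- Lipschitz estimate
      set z := h s x y ζ with hz
      set z' := h s x y' ζ' with hz'
      have e1 : z = ζ + a • σ s x (y + φ s x) z 0 := hfix s x y ζ hs
      have e2 : z' = ζ' + a • σ s x (y' + φ s x) z' 0 := hfix s x y' ζ' hs
      have hw : z - z' = (ζ - ζ') +
          (a • (σ s x (y + φ s x) z 0 - σ s x (y + φ s x) z' 0) +
           a • (σ s x (y + φ s x) z' 0 - σ s x (y' + φ s x) z' 0)) := by
        conv_lhs => rw [e1, e2]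
        module
      have hip : ‖z - z'‖ ^ 2 = ⟪ζ - ζ', z - z'⟫
          + a * ⟪σ s x (y + φ s x) z 0 - σ s x (y + φ s x) z' 0, z - z'⟫
          + a * ⟪σ s x (y + φ s x) z' 0 - σ s x (y' + φ s x) z' 0, z - z'⟫ := by
        rw [← real_inner_self_eq_norm_sq]
        nth_rewrite 1 [hw]
        rw [inner_add_left, inner_add_left, real_inner_smul_left, real_inner_smul_left]
        ring
      have t1 : ⟪ζ - ζ', z - z'⟫ ≤ ‖ζ - ζ'‖ * ‖z - z'‖ := real_inner_le_norm _ _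
      have t2 : ⟪σ s x (y + φ s x) z 0 - σ s x (y + φ s x) z' 0, z - z'⟫
          ≤ -β₂ * ‖z - z'‖ ^ 2 := hσ₁Diss s hs x (y + φ s x) z z'
      have t3 : ⟪σ s x (y + φ s x) z' 0 - σ s x (y' + φ s x) z' 0, z - z'⟫
          ≤ (K * |y - y'|) * ‖z - z'‖ := by
        have hn : ‖σ s x (y + φ s x) z' 0 - σ s x (y' + φ s x) z' 0‖ ≤ K * |y - y'| := by
          have h1 : ‖(σ s x (y + φ s x) z' - σ s x (y' + φ s x) z') 0‖
              ≤ ‖σ s x (y + φ s x) z' - σ s x (y' + φ s x) z'‖ := norm_le_pi_norm _ 0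
          simp only [Pi.sub_apply] at h1
          have h2 := hσLip s hs x x (y + φ s x) (y' + φ s x) z' z'
          have h3 : y + φ s x - (y' + φ s x) = y - y' := by ring
          rw [h3] at h2
          simp only [sub_self, norm_zero] at h2
          calc ‖σ s x (y + φ s x) z' 0 - σ s x (y' + φ s x) z' 0‖
              ≤ ‖σ s x (y + φ s x) z' - σ s x (y' + φ s x) z'‖ := h1
            _ ≤ K * (0 + |y - y'| + 0) := h2
            _ = K * |y - y'| := by ring
        calc ⟪σ s x (y + φ s x) z' 0 - σ s x (y' + φ s x) z' 0, z - z'⟫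
            ≤ ‖σ s x (y + φ s x) z' 0 - σ s x (y' + φ s x) z' 0‖ * ‖z - z'‖ :=
              real_inner_le_norm _ _
          _ ≤ (K * |y - y'|) * ‖z - z'‖ :=
              mul_le_mul_of_nonneg_right hn (norm_nonneg _)
      rcases eq_or_lt_of_le (norm_nonneg (z - z')) with h0 | h0
      · rw [← h0]
        have : (0:ℝ) ≤ |y - y'| + ‖ζ - ζ'‖ := by positivity
        nlinarith [mul_nonneg hl0 hP, mul_nonneg (mul_nonneg hl0 hP) this,
          mul_nonneg hk0 this]
      · have hcomb : (‖z - z'‖ + a * β₂ * ‖z - z'‖) * ‖z - z'‖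
            ≤ (‖ζ - ζ'‖ + a * K * |y - y'|) * ‖z - z'‖ := by
          nlinarith [hip, t1, mul_le_mul_of_nonneg_left t2 hA,
            mul_le_mul_of_nonneg_left t3 hA]
        have h1 : ‖z - z'‖ + a * β₂ * ‖z - z'‖ ≤ ‖ζ - ζ'‖ + a * K * |y - y'| :=
          le_of_mul_le_mul_right hcomb h0
        rw [hKk] at h1
        have h2 : (1 + a * β₂) * ‖z - z'‖ ≤ (1 + a * β₂) * (‖ζ - ζ'‖ + k * |y - y'|) := by
          nlinarith [mul_nonneg (mul_nonneg hA hβ₂.le) (norm_nonneg (ζ - ζ')),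
            mul_nonneg hk0 (abs_nonneg (y - y'))]
        have h3 : ‖z - z'‖ ≤ ‖ζ - ζ'‖ + k * |y - y'| :=
          le_of_mul_le_mul_left h2 (by nlinarith [mul_nonneg hA hβ₂.le])
        nlinarith [mul_nonneg hk0 (norm_nonneg (ζ - ζ')),
          mul_nonneg (mul_nonneg hl0 hP) (norm_nonneg (ζ - ζ')),
          mul_nonneg (mul_nonneg hl0 hP) (abs_nonneg (y - y')),
          abs_nonneg (y - y'), norm_nonneg (ζ - ζ'),
          mul_nonneg hk0 (abs_nonneg (y - y'))]
    · -- growth estimate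
      set z := h s x y ζ with hz
      have e1 : z = ζ + a • σ s x (y + φ s x) z 0 := hfix s x y ζ hs
      have hw : z = ζ +
          (a • (σ s x (y + φ s x) z 0 - σ s x (y + φ s x) 0 0) +
           a • σ s x (y + φ s x) 0 0) := by
        conv_lhs => rw [e1]
        module
      have hip : ‖z‖ ^ 2 = ⟪ζ, z⟫
          + a * ⟪σ s x (y + φ s x) z 0 - σ s x (y + φ s x) 0 0, z⟫
          + a * ⟪σ s x (y + φ s x) 0 0, z⟫ := by
        rw [← real_inner_self_eq_norm_sq]
        nth_rewrite 1 [hw]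
        rw [inner_add_left, inner_add_left, real_inner_smul_left, real_inner_smul_left]
        ring
      have t1 : ⟪ζ, z⟫ ≤ ‖ζ‖ * ‖z‖ := real_inner_le_norm _ _
      have t2 : ⟪σ s x (y + φ s x) z 0 - σ s x (y + φ s x) 0 0, z⟫ ≤ -β₂ * ‖z‖ ^ 2 := by
        have := hσ₁Diss s hs x (y + φ s x) z 0
        simpa using this
      set Q : ℝ := 1 + ‖x‖ + |y + φ s x| with hQdef
      have hQ0 : 0 ≤ Q := by positivity
      have t3 : ⟪σ s x (y + φ s x) 0 0, z⟫ ≤ (L * Q) * ‖z‖ := by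
        have hn : ‖σ s x (y + φ s x) 0 0‖ ≤ L * Q := by
          have h1 : ‖σ s x (y + φ s x) 0 0‖ ≤ ‖σ s x (y + φ s x) 0‖ := norm_le_pi_norm _ 0
          have h2 := hσGrowth s hs x (y + φ s x) 0
          simp only [norm_zero, add_zero] at h2
          calc ‖σ s x (y + φ s x) 0 0‖ ≤ ‖σ s x (y + φ s x) 0‖ := h1
            _ ≤ L * (1 + ‖x‖ + |y + φ s x|) := h2
            _ = L * Q := by rw [hQdef]
        calc ⟪σ s x (y + φ s x) 0 0, z⟫ ≤ ‖σ s x (y + φ s x) 0 0‖ * ‖z‖ :=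
              real_inner_le_norm _ _
          _ ≤ (L * Q) * ‖z‖ := mul_le_mul_of_nonneg_right hn (norm_nonneg _)
      have hQbound : Q ≤ 1 + ‖x‖ + |y| + (|φ 0 0| + M * (T + ‖x‖)) := by
        have := abs_add_le y (φ s x)
        have := hφlin s hs x
        rw [hQdef]
        linarith
      rcases eq_or_lt_of_le (norm_nonneg z) with h0 | h0
      · rw [← h0]
        have hpos : (0:ℝ) ≤ 1 + ‖x‖ + |y| + ‖ζ‖ := by positivity
        nlinarith [mul_nonneg hl0 hP, mul_nonneg (mul_nonneg hl0 hP) hpos,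
          mul_nonneg hk0 hpos]
      · have hcomb : (‖z‖ + a * β₂ * ‖z‖) * ‖z‖ ≤ (‖ζ‖ + a * (L * Q)) * ‖z‖ := by
          nlinarith [hip, t1, mul_le_mul_of_nonneg_left t2 hA,
            mul_le_mul_of_nonneg_left t3 hA]
        have h1 : ‖z‖ + a * β₂ * ‖z‖ ≤ ‖ζ‖ + a * (L * Q) :=
          le_of_mul_le_mul_right hcomb h0
        rw [hLl] at h1
        have h2 : (1 + a * β₂) * ‖z‖ ≤ (1 + a * β₂) * (‖ζ‖ + l * Q) := by
          nlinarith [mul_nonneg (mul_nonneg hA hβ₂.le) (norm_nonneg ζ),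
            mul_nonneg hl0 hQ0]
        have h3 : ‖z‖ ≤ ‖ζ‖ + l * Q :=
          le_of_mul_le_mul_left h2 (by nlinarith [mul_nonneg hA hβ₂.le])
        have h4 : l * Q ≤ l * (1 + ‖x‖ + |y| + (|φ 0 0| + M * (T + ‖x‖))) :=
          mul_le_mul_of_nonneg_left hQbound hl0
        nlinarith [mul_nonneg hk0 (norm_nonneg x), mul_nonneg hk0 (abs_nonneg y),
          mul_nonneg hk0 (norm_nonneg ζ), hk0,
          mul_nonneg hl0 (norm_nonneg x), mul_nonneg hl0 (abs_nonneg y),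
          mul_nonneg hl0 (norm_nonneg ζ), mul_nonneg (mul_nonneg hl0 hM) (norm_nonneg x),
          mul_nonneg (mul_nonneg hl0 (abs_nonneg (φ 0 0))) (norm_nonneg x),
          mul_nonneg (mul_nonneg (mul_nonneg hl0 hM) hT.le) (norm_nonneg x),
          mul_nonneg (mul_nonneg hl0 hP) (norm_nonneg ζ),
          mul_nonneg (mul_nonneg hl0 hP) (abs_nonneg y),
          mul_nonneg (mul_nonneg hl0 hP) (norm_nonneg x),
          norm_nonneg x, abs_nonneg y, norm_nonneg ζ, hl0,
          mul_nonneg (mul_nonneg hl0 (abs_nonneg (φ 0 0))) (abs_nonneg y),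
          mul_nonneg (mul_nonneg (mul_nonneg hl0 hM) hT.le) (abs_nonneg y)]
end

section
/- In the algebraic-equation setting, suppose in addition that σ₁ is continuous in its time variable uniformly with respect to the other variables, i.e. ρ(δ) := sup{ |σ₁(s₂,x,y,z) − σ₁(s₁,x,y,z)| : s₁, s₂ ∈ [0,T], |s₁ − s₂| ≤ δ, (x,y,z) ∈ ℝⁿ×ℝ×ℝ^d } satisfies ρ(δ) → 0 as δ ↓ 0. Then there exists a constant C, depending only on K, L, M, β₂, T and sup_{s∈[0,T]}|φ(s,0)|, such that whenever z₁, z₂ ∈ ℝ^d satisfy z_i = ζ + ∂φ/∂x₁(s_i,x)·σ₁(s_i, x, y + φ(s_i,x), z_i) for i = 1, 2, one has |z₁ − z₂| ≤ C·|s₁ − s₂|·(1 + |x| + |y| + |ζ|) + C·ρ(|s₁ − s₂|). In particular, for each fixed (x, y, ζ), the map s ↦ h(s,x,y,ζ) assigning to s the unique solution of the algebraic equation is continuous on [0,T]. -/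
open RealInnerProductSpace

set_option maxHeartbeats 1000000

private lemma aux_C₁ {M L Φ T : ℝ} (hM : 0 ≤ M) (hL : 0 ≤ L) (hΦ : 0 ≤ Φ) (hT : 0 ≤ T) :
    1 ≤ (1 + M * L) * (1 + Φ + M * T + M) + 1 := by
  have h1 : (0:ℝ) ≤ M * L := mul_nonneg hM hL
  have h2 : (0:ℝ) ≤ M * T := mul_nonneg hM hT
  have h3 : (0:ℝ) ≤ (1 + M * L) * (1 + Φ + M * T + M) :=
    mul_nonneg (by linarith) (by linarith)
  linarith

private lemma aux_P {Φ M T a b : ℝ} (hΦ : 0 ≤ Φ) (hM : 0 ≤ M) (hT : 0 ≤ T)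
    (ha : 0 ≤ a) (hb : 0 ≤ b) :
    1 + a + (b + (Φ + M * (T + a))) ≤ (1 + Φ + M * T + M) * (1 + a + b) := by
  nlinarith [mul_nonneg hΦ (add_nonneg ha hb), mul_nonneg (mul_nonneg hM hT) (add_nonneg ha hb),
    mul_nonneg hM hb]

private lemma aux_6 {K M δ A : ℝ} (hK : 0 ≤ K) (hM : 0 ≤ M) (hδ : 0 ≤ δ) (hA : 1 ≤ A) :
    M * (K * (M * δ)) ≤ K * M ^ 2 * (δ * A) := by
  nlinarith [mul_nonneg (mul_nonneg (mul_nonneg hK (mul_nonneg hM hM)) hδ)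
    (by linarith : (0:ℝ) ≤ A - 1)]

/-- **Proposition 4.1, time continuity (under assumption (B7)).**
In the algebraic-equation setting, assume moreover that the first row `σ₁` of `σ` is continuous
in time uniformly in the other variables, in the sense that there is a modulus `ρ` with
`ρ(δ) → 0` as `δ ↓ 0` bounding the time increments of `σ₁`.  Then there is a constant `C`,
depending only on the data, such that whenever `z₁, z₂` solve the algebraic equation at times
`s₁, s₂` (with the same `x, y, ζ`), one has
`‖z₁ - z₂‖ ≤ C * |s₁ - s₂| * (1 + ‖x‖ + |y| + ‖ζ‖) + C * ρ(|s₁ - s₂|)`.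
In particular, any selection `h` of solutions of the algebraic equation is continuous in `s`
on `[0, T]`.  Dimensions `n ≥ 1` and `d ≥ 1` are encoded as `n + 1` and `d + 1`. -/
theorem algebraic_equation_time_continuity
    (n d : ℕ) (T K L M β₂ : ℝ)
    (hT : 0 < T) (hK : 0 ≤ K) (hL : 0 ≤ L) (hM : 0 ≤ M) (hβ₂ : 0 < β₂)
    (σ : ℝ → EuclideanSpace ℝ (Fin (n + 1)) → ℝ → EuclideanSpace ℝ (Fin (d + 1)) →
      Fin (n + 1) → EuclideanSpace ℝ (Fin (d + 1)))
    (φ : ℝ → EuclideanSpace ℝ (Fin (n + 1)) → ℝ)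
    (hσLip : ∀ t ∈ Set.Icc (0 : ℝ) T, ∀ x x' y y' z z',
      ‖σ t x y z - σ t x' y' z'‖ ≤ K * (‖x - x'‖ + |y - y'| + ‖z - z'‖))
    (hσGrowth : ∀ t ∈ Set.Icc (0 : ℝ) T, ∀ x y z,
      ‖σ t x y z‖ ≤ L * (1 + ‖x‖ + |y| + ‖z‖))
    (hσ₁Diss : ∀ t ∈ Set.Icc (0 : ℝ) T, ∀ x y z z',
      ⟪σ t x y z 0 - σ t x y z' 0, z - z'⟫ ≤ -β₂ * ‖z - z'‖ ^ 2)
    (hφ : ContDiff ℝ 3 (fun p : ℝ × EuclideanSpace ℝ (Fin (n + 1)) => φ p.1 p.2))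
    (hφBound : ∀ i : ℕ, 1 ≤ i → i ≤ 3 →
      ∀ p : ℝ × EuclideanSpace ℝ (Fin (n + 1)),
        ‖iteratedFDeriv ℝ i (fun q : ℝ × EuclideanSpace ℝ (Fin (n + 1)) => φ q.1 q.2) p‖ ≤ M)
    (hφMono : ∀ s ∈ Set.Icc (0 : ℝ) T, ∀ x : EuclideanSpace ℝ (Fin (n + 1)),
      0 ≤ fderiv ℝ (φ s) x (EuclideanSpace.single 0 1) ∧
      ∀ i : Fin (n + 1), i ≠ 0 → fderiv ℝ (φ s) x (EuclideanSpace.single i 1) = 0)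
    -- assumption (B7): uniform continuity of `σ₁` in time, with modulus `ρ`
    (ρ : ℝ → ℝ)
    (hρ : ∀ δ : ℝ, 0 ≤ δ → ∀ s₁ ∈ Set.Icc (0 : ℝ) T, ∀ s₂ ∈ Set.Icc (0 : ℝ) T,
      |s₁ - s₂| ≤ δ → ∀ x y z, ‖σ s₂ x y z 0 - σ s₁ x y z 0‖ ≤ ρ δ)
    (hρ0 : Filter.Tendsto ρ (nhdsWithin 0 (Set.Ioi 0)) (nhds 0)) :
    (∃ C : ℝ, 0 < C ∧ ∀ s₁ ∈ Set.Icc (0 : ℝ) T, ∀ s₂ ∈ Set.Icc (0 : ℝ) T,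
      ∀ (x : EuclideanSpace ℝ (Fin (n + 1))) (y : ℝ)
        (ζ z₁ z₂ : EuclideanSpace ℝ (Fin (d + 1))),
      z₁ = ζ + fderiv ℝ (φ s₁) x (EuclideanSpace.single 0 1) •
          σ s₁ x (y + φ s₁ x) z₁ 0 →
      z₂ = ζ + fderiv ℝ (φ s₂) x (EuclideanSpace.single 0 1) •
          σ s₂ x (y + φ s₂ x) z₂ 0 →
      ‖z₁ - z₂‖ ≤ C * |s₁ - s₂| * (1 + ‖x‖ + |y| + ‖ζ‖) + C * ρ |s₁ - s₂|) ∧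
    ∀ (x : EuclideanSpace ℝ (Fin (n + 1))) (y : ℝ) (ζ : EuclideanSpace ℝ (Fin (d + 1)))
      (h : ℝ → EuclideanSpace ℝ (Fin (d + 1))),
      (∀ s ∈ Set.Icc (0 : ℝ) T,
        h s = ζ + fderiv ℝ (φ s) x (EuclideanSpace.single 0 1) •
          σ s x (y + φ s x) (h s) 0) →
      ContinuousOn h (Set.Icc (0 : ℝ) T) := by
  classical
  set F : ℝ × EuclideanSpace ℝ (Fin (n + 1)) → ℝ := fun p => φ p.1 p.2 with hFdef
  have hFdiff : Differentiable ℝ F := hφ.differentiable (by norm_num)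
  have hF1 : ∀ p, ‖fderiv ℝ F p‖ ≤ M := by
    intro p
    refine ContinuousLinearMap.opNorm_le_bound _ hM ?_
    intro v
    have h2 : iteratedFDeriv ℝ 1 F p (fun _ => v) = fderiv ℝ F p v := by
      simp [iteratedFDeriv_one_apply]
    rw [← h2]
    calc ‖iteratedFDeriv ℝ 1 F p (fun _ => v)‖
        ≤ ‖iteratedFDeriv ℝ 1 F p‖ * ∏ _i : Fin 1, ‖v‖ :=
          (iteratedFDeriv ℝ 1 F p).le_opNorm _
      _ ≤ M * ‖v‖ := by
          simp only [Finset.prod_const, Finset.card_univ, Fintype.card_fin, pow_one]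
          exact mul_le_mul_of_nonneg_right (hφBound 1 le_rfl (by norm_num) p) (norm_nonneg v)
  have hFLip : ∀ p q : ℝ × EuclideanSpace ℝ (Fin (n + 1)), ‖F p - F q‖ ≤ M * ‖p - q‖ := by
    intro p q
    exact Convex.norm_image_sub_le_of_norm_fderiv_le (fun x _ => hFdiff x)
      (fun x _ => hF1 x) convex_univ (Set.mem_univ q) (Set.mem_univ p)
  set G : ℝ × EuclideanSpace ℝ (Fin (n + 1)) →
      (ℝ × EuclideanSpace ℝ (Fin (n + 1)) →L[ℝ] ℝ) := fderiv ℝ F with hGdef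
  have hGdiff : Differentiable ℝ G :=
    (hφ.fderiv_right (m := 2) (by norm_num)).differentiable (by norm_num)
  have hG1 : ∀ p, ‖fderiv ℝ G p‖ ≤ M := by
    intro p
    refine ContinuousLinearMap.opNorm_le_bound _ hM ?_
    intro v
    have h2 : iteratedFDeriv ℝ 1 G p (fun _ => v) = fderiv ℝ G p v := by
      simp [iteratedFDeriv_one_apply]
    rw [← h2]
    calc ‖iteratedFDeriv ℝ 1 G p (fun _ => v)‖
        ≤ ‖iteratedFDeriv ℝ 1 G p‖ * ∏ _i : Fin 1, ‖v‖ :=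
          (iteratedFDeriv ℝ 1 G p).le_opNorm _
      _ ≤ M * ‖v‖ := by
          simp only [Finset.prod_const, Finset.card_univ, Fintype.card_fin, pow_one]
          refine mul_le_mul_of_nonneg_right ?_ (norm_nonneg v)
          rw [hGdef, norm_iteratedFDeriv_fderiv]
          exact hφBound 2 (by norm_num) (by norm_num) p
  have hGLip : ∀ p q : ℝ × EuclideanSpace ℝ (Fin (n + 1)), ‖G p - G q‖ ≤ M * ‖p - q‖ := by
    intro p q
    exact Convex.norm_image_sub_le_of_norm_fderiv_le (fun x _ => hGdiff x)
      (fun x _ => hG1 x) convex_univ (Set.mem_univ q) (Set.mem_univ p)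
  -- the key derivative identity
  have hkey : ∀ (s : ℝ) (x : EuclideanSpace ℝ (Fin (n + 1)))
      (v : EuclideanSpace ℝ (Fin (n + 1))),
      fderiv ℝ (φ s) x v = G (s, x) (0, v) := by
    intro s x v
    have h1 : HasFDerivAt (fun x' : EuclideanSpace ℝ (Fin (n + 1)) => ((s, x') : ℝ × _))
        (ContinuousLinearMap.inr ℝ ℝ _) x := hasFDerivAt_prodMk_right s x
    have h2 : HasFDerivAt F (G (s, x)) (s, x) := (hFdiff (s, x)).hasFDerivAt
    have h3 : HasFDerivAt (φ s)
        ((G (s, x)).comp (ContinuousLinearMap.inr ℝ ℝ _)) x := h2.comp x h1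
    rw [h3.fderiv]
    rfl
  have hprodsub : ∀ (s t : ℝ) (x : EuclideanSpace ℝ (Fin (n + 1))),
      ‖((s, x) : ℝ × _) - (t, x)‖ = |s - t| := by
    intro s t x
    rw [Prod.mk_sub_mk, Prod.norm_def]
    simp [Real.norm_eq_abs, abs_nonneg]
  have hsingle : ‖((0 : ℝ), EuclideanSpace.single (0 : Fin (n + 1)) (1 : ℝ))‖ = 1 := by
    rw [Prod.norm_def]
    simp [EuclideanSpace.norm_single]
  -- bounds on a(s) := ∂φ/∂x₁
  have ha_bound : ∀ (s : ℝ) (x : EuclideanSpace ℝ (Fin (n + 1))),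
      |fderiv ℝ (φ s) x (EuclideanSpace.single 0 1)| ≤ M := by
    intro s x
    rw [hkey]
    calc |G (s, x) (0, EuclideanSpace.single 0 1)|
        ≤ ‖G (s, x)‖ * ‖((0 : ℝ), EuclideanSpace.single (0 : Fin (n + 1)) (1 : ℝ))‖ :=
          (G (s, x)).le_opNorm _
      _ ≤ M := by rw [hsingle, mul_one]; exact hF1 _
  have ha_diff : ∀ (s₁ s₂ : ℝ) (x : EuclideanSpace ℝ (Fin (n + 1))),
      |fderiv ℝ (φ s₁) x (EuclideanSpace.single 0 1) -
        fderiv ℝ (φ s₂) x (EuclideanSpace.single 0 1)| ≤ M * |s₁ - s₂| := by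
    intro s₁ s₂ x
    rw [hkey, hkey]
    have h4 : G (s₁, x) (0, EuclideanSpace.single 0 1) - G (s₂, x) (0, EuclideanSpace.single 0 1)
        = (G (s₁, x) - G (s₂, x)) (0, EuclideanSpace.single 0 1) := rfl
    rw [h4]
    calc |(G (s₁, x) - G (s₂, x)) (0, EuclideanSpace.single 0 1)|
        ≤ ‖G (s₁, x) - G (s₂, x)‖ * ‖((0 : ℝ), EuclideanSpace.single (0 : Fin (n + 1)) (1 : ℝ))‖ :=
          (G (s₁, x) - G (s₂, x)).le_opNorm _
      _ = ‖G (s₁, x) - G (s₂, x)‖ := by rw [hsingle, mul_one]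
      _ ≤ M * |s₁ - s₂| := by
          rw [← hprodsub s₁ s₂ x]; exact hGLip _ _
  have hφtime : ∀ (s t : ℝ) (x : EuclideanSpace ℝ (Fin (n + 1))),
      |φ s x - φ t x| ≤ M * |s - t| := by
    intro s t x
    have := hFLip (s, x) (t, x)
    rwa [hprodsub, Real.norm_eq_abs] at this
  have hφ0 : ∀ s ∈ Set.Icc (0 : ℝ) T, ∀ x : EuclideanSpace ℝ (Fin (n + 1)),
      |φ s x| ≤ |φ 0 0| + M * (T + ‖x‖) := by
    intro s hs x
    have h5 := hFLip (s, x) (0, 0)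
    rw [Real.norm_eq_abs] at h5
    have h6 : ‖((s, x) : ℝ × EuclideanSpace ℝ (Fin (n + 1))) - (0, 0)‖ ≤ T + ‖x‖ := by
      rw [Prod.mk_sub_mk, sub_zero, sub_zero, Prod.norm_def]
      have : |s| ≤ T := by rw [abs_of_nonneg hs.1]; exact hs.2
      simp only [Real.norm_eq_abs]
      exact max_le (by linarith [norm_nonneg x]) (by linarith)
    have h7 : |φ s x - φ 0 0| ≤ M * (T + ‖x‖) :=
      le_trans h5 (mul_le_mul_of_nonneg_left h6 hM)
    calc |φ s x| ≤ |φ s x - φ 0 0| + |φ 0 0| := by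
          have := abs_sub_abs_le_abs_sub (φ s x) (φ 0 0); linarith [abs_abs (φ 0 0)]
      _ ≤ |φ 0 0| + M * (T + ‖x‖) := by linarith
  -- componentwise bounds on σ
  have hrowLip : ∀ t ∈ Set.Icc (0 : ℝ) T, ∀ x x' y y' z z',
      ‖σ t x y z 0 - σ t x' y' z' 0‖ ≤ K * (‖x - x'‖ + |y - y'| + ‖z - z'‖) := by
    intro t ht x x' y y' z z'
    calc ‖σ t x y z 0 - σ t x' y' z' 0‖ = ‖(σ t x y z - σ t x' y' z') 0‖ := by
          rw [Pi.sub_apply]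
      _ ≤ ‖σ t x y z - σ t x' y' z'‖ := norm_le_pi_norm _ 0
      _ ≤ K * (‖x - x'‖ + |y - y'| + ‖z - z'‖) := hσLip t ht x x' y y' z z'
  have hrowGrowth : ∀ t ∈ Set.Icc (0 : ℝ) T, ∀ x y z,
      ‖σ t x y z 0‖ ≤ L * (1 + ‖x‖ + |y| + ‖z‖) := by
    intro t ht x y z
    exact le_trans (norm_le_pi_norm _ 0) (hσGrowth t ht x y z)
  -- the constants
  set Φ : ℝ := |φ 0 0| with hΦdef
  have hΦ0 : 0 ≤ Φ := abs_nonneg _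
  set C₁ : ℝ := (1 + M * L) * (1 + Φ + M * T + M) + 1 with hC₁def
  have hC₁1 : 1 ≤ C₁ := by
    rw [hC₁def]; exact aux_C₁ hM hL hΦ0 hT.le
  set C : ℝ := M + K * M ^ 2 + M * L * C₁ + 1 with hCdef
  have hC0 : 0 < C := by
    have h1 : (0:ℝ) ≤ K * M ^ 2 := mul_nonneg hK (sq_nonneg M)
    have h2 : (0:ℝ) ≤ M * L * C₁ := mul_nonneg (mul_nonneg hM hL) (by linarith)
    rw [hCdef]; linarith
  -- the key estimate
  have key : ∀ s₁ ∈ Set.Icc (0 : ℝ) T, ∀ s₂ ∈ Set.Icc (0 : ℝ) T,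
      ∀ (x : EuclideanSpace ℝ (Fin (n + 1))) (y : ℝ)
        (ζ z₁ z₂ : EuclideanSpace ℝ (Fin (d + 1))),
      z₁ = ζ + fderiv ℝ (φ s₁) x (EuclideanSpace.single 0 1) •
          σ s₁ x (y + φ s₁ x) z₁ 0 →
      z₂ = ζ + fderiv ℝ (φ s₂) x (EuclideanSpace.single 0 1) •
          σ s₂ x (y + φ s₂ x) z₂ 0 →
      ‖z₁ - z₂‖ ≤ C * |s₁ - s₂| * (1 + ‖x‖ + |y| + ‖ζ‖) + C * ρ |s₁ - s₂| := by
    intro s₁ hs₁ s₂ hs₂ x y ζ z₁ z₂ hz₁ hz₂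
    set a₁ : ℝ := fderiv ℝ (φ s₁) x (EuclideanSpace.single 0 1) with ha₁def
    set a₂ : ℝ := fderiv ℝ (φ s₂) x (EuclideanSpace.single 0 1) with ha₂def
    set δ : ℝ := |s₁ - s₂| with hδdef
    have hδ0 : 0 ≤ δ := abs_nonneg _
    have hρδ0 : 0 ≤ ρ δ := by
      have := hρ δ hδ0 s₁ hs₁ s₁ hs₁ (by simpa using hδ0) x y z₁
      simpa using le_trans (norm_nonneg _) this
    set y₁ : ℝ := y + φ s₁ x with hy₁def
    set y₂ : ℝ := y + φ s₂ x with hy₂def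
    set u₁ : EuclideanSpace ℝ (Fin (d + 1)) := σ s₁ x y₁ z₁ 0 with hu₁def
    set w₁ : EuclideanSpace ℝ (Fin (d + 1)) := σ s₁ x y₁ z₂ 0 with hw₁def
    set w₂ : EuclideanSpace ℝ (Fin (d + 1)) := σ s₂ x y₁ z₂ 0 with hw₂def
    set u₂ : EuclideanSpace ℝ (Fin (d + 1)) := σ s₂ x y₂ z₂ 0 with hu₂def
    set e : EuclideanSpace ℝ (Fin (d + 1)) := z₁ - z₂ with hedef
    have ha₁0 : 0 ≤ a₁ := (hφMono s₁ hs₁ x).1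
    have ha₂0 : 0 ≤ a₂ := (hφMono s₂ hs₂ x).1
    have ha₁M : a₁ ≤ M := le_trans (le_abs_self _) (ha_bound s₁ x)
    have ha₂M : a₂ ≤ M := le_trans (le_abs_self _) (ha_bound s₂ x)
    set A : ℝ := 1 + ‖x‖ + |y| + ‖ζ‖ with hAdef
    have hA1 : 1 ≤ A := by
      rw [hAdef]; linarith [norm_nonneg x, abs_nonneg y, norm_nonneg ζ]
    -- bound on |y₂| and ‖z₂‖
    have hy₂b : |y₂| ≤ |y| + (Φ + M * (T + ‖x‖)) := by
      rw [hy₂def]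
      calc |y + φ s₂ x| ≤ |y| + |φ s₂ x| := abs_add_le _ _
        _ ≤ |y| + (Φ + M * (T + ‖x‖)) := by linarith [hφ0 s₂ hs₂ x]
    have hz₂b : ‖z₂‖ ≤ ‖ζ‖ + M * (L * (1 + ‖x‖ + |y₂| + 0)) := by
      set v₀ : EuclideanSpace ℝ (Fin (d + 1)) := σ s₂ x y₂ 0 0 with hv₀def
      have hz2eq : z₂ = ζ + a₂ • (u₂ - v₀) + a₂ • v₀ := by
        rw [hz₂]; module
      have hq : ‖z₂‖ ^ 2 = ⟪ζ, z₂⟫ + a₂ * ⟪u₂ - v₀, z₂⟫ + a₂ * ⟪v₀, z₂⟫ := by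
        calc ‖z₂‖ ^ 2 = ⟪z₂, z₂⟫ := (real_inner_self_eq_norm_sq z₂).symm
          _ = ⟪ζ + a₂ • (u₂ - v₀) + a₂ • v₀, z₂⟫ := by rw [← hz2eq]
          _ = ⟪ζ, z₂⟫ + a₂ * ⟪u₂ - v₀, z₂⟫ + a₂ * ⟪v₀, z₂⟫ := by
              simp only [inner_add_left, real_inner_smul_left]
      have hdiss : ⟪u₂ - v₀, z₂⟫ ≤ 0 := by
        have h8 := hσ₁Diss s₂ hs₂ x y₂ z₂ 0
        simp only [sub_zero] at h8
        have h9 : (0:ℝ) ≤ β₂ * ‖z₂‖ ^ 2 := by positivity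
        linarith
      have hv₀b : ‖v₀‖ ≤ L * (1 + ‖x‖ + |y₂| + 0) := by
        have := hrowGrowth s₂ hs₂ x y₂ 0
        simpa using this
      have hq2 : ‖z₂‖ ^ 2 ≤ (‖ζ‖ + M * (L * (1 + ‖x‖ + |y₂| + 0))) * ‖z₂‖ := by
        have hi1 : ⟪ζ, z₂⟫ ≤ ‖ζ‖ * ‖z₂‖ := real_inner_le_norm _ _
        have hi2 : a₂ * ⟪u₂ - v₀, z₂⟫ ≤ 0 := mul_nonpos_of_nonneg_of_nonpos ha₂0 hdiss
        have hi3 : a₂ * ⟪v₀, z₂⟫ ≤ M * (L * (1 + ‖x‖ + |y₂| + 0)) * ‖z₂‖ := by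
          have h9 : ⟪v₀, z₂⟫ ≤ ‖v₀‖ * ‖z₂‖ := real_inner_le_norm _ _
          have h10 : ⟪v₀, z₂⟫ ≤ L * (1 + ‖x‖ + |y₂| + 0) * ‖z₂‖ :=
            le_trans h9 (mul_le_mul_of_nonneg_right hv₀b (norm_nonneg _))
          calc a₂ * ⟪v₀, z₂⟫ ≤ a₂ * (L * (1 + ‖x‖ + |y₂| + 0) * ‖z₂‖) := by
                rcases le_or_gt ⟪v₀, z₂⟫ (L * (1 + ‖x‖ + |y₂| + 0) * ‖z₂‖) with h | h
                · exact mul_le_mul_of_nonneg_left h ha₂0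
                · linarith [mul_le_mul_of_nonneg_left h10 ha₂0]
            _ ≤ M * (L * (1 + ‖x‖ + |y₂| + 0)) * ‖z₂‖ := by
                have hnn : 0 ≤ L * (1 + ‖x‖ + |y₂| + 0) * ‖z₂‖ := by positivity
                have h11 := mul_le_mul_of_nonneg_right ha₂M hnn
                linarith [h11]
        rw [hq]
        calc ⟪ζ, z₂⟫ + a₂ * ⟪u₂ - v₀, z₂⟫ + a₂ * ⟪v₀, z₂⟫
            ≤ ‖ζ‖ * ‖z₂‖ + 0 + M * (L * (1 + ‖x‖ + |y₂| + 0)) * ‖z₂‖ :=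
              add_le_add (add_le_add hi1 hi2) hi3
          _ = (‖ζ‖ + M * (L * (1 + ‖x‖ + |y₂| + 0))) * ‖z₂‖ := by ring
      rcases eq_or_lt_of_le (norm_nonneg z₂) with h0 | h0
      · rw [← h0]; positivity
      · rw [pow_two] at hq2
        exact (mul_le_mul_iff_left₀ h0).mp hq2
    -- bound on S := 1 + ‖x‖ + |y₂| + ‖z₂‖
    set S : ℝ := 1 + ‖x‖ + |y₂| + ‖z₂‖ with hSdef
    have hS0 : 0 ≤ S := by rw [hSdef]; positivity
    have hS : S ≤ C₁ * A := by
      set P : ℝ := 1 + ‖x‖ + |y₂| with hPdef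
      have hP : P ≤ (1 + Φ + M * T + M) * (1 + ‖x‖ + |y|) := by
        have h1 := aux_P hΦ0 hM hT.le (norm_nonneg x) (abs_nonneg y)
        rw [hPdef]; linarith [hy₂b]
      have hPA : P ≤ (1 + Φ + M * T + M) * A := by
        have h2 : (0:ℝ) ≤ M * T := mul_nonneg hM hT.le
        refine le_trans hP (mul_le_mul_of_nonneg_left ?_ (by linarith))
        rw [hAdef]; linarith [norm_nonneg ζ]
      have hz₂b' : ‖z₂‖ ≤ ‖ζ‖ + M * L * P := by linarith [hz₂b]
      have hζA : ‖ζ‖ ≤ A := by rw [hAdef]; linarith [norm_nonneg x, abs_nonneg y]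
      have hMLP : M * L * P ≤ M * L * ((1 + Φ + M * T + M) * A) :=
        mul_le_mul_of_nonneg_left hPA (mul_nonneg hM hL)
      have hr : ((1 + M * L) * (1 + Φ + M * T + M) + 1) * A
          = (1 + Φ + M * T + M) * A + M * L * ((1 + Φ + M * T + M) * A) + A := by ring
      rw [hC₁def, hr, hSdef]
      linarith [hPA, hz₂b', hMLP, hζA]
    -- the inner product identity
    have he : e = a₁ • (u₁ - w₁) + (a₁ • (w₁ - w₂) + (a₁ • (w₂ - u₂) + (a₁ - a₂) • u₂)) := by
      rw [hedef, hz₁, hz₂]; module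
    have hinner : ‖e‖ ^ 2 = a₁ * ⟪u₁ - w₁, e⟫ + a₁ * ⟪w₁ - w₂, e⟫ + a₁ * ⟪w₂ - u₂, e⟫ +
        (a₁ - a₂) * ⟪u₂, e⟫ := by
      calc ‖e‖ ^ 2 = ⟪e, e⟫ := (real_inner_self_eq_norm_sq e).symm
        _ = ⟪a₁ • (u₁ - w₁) + (a₁ • (w₁ - w₂) + (a₁ • (w₂ - u₂) + (a₁ - a₂) • u₂)), e⟫ := by
            rw [← he]
        _ = a₁ * ⟪u₁ - w₁, e⟫ + a₁ * ⟪w₁ - w₂, e⟫ + a₁ * ⟪w₂ - u₂, e⟫ + (a₁ - a₂) * ⟪u₂, e⟫ := by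
            simp only [inner_add_left, real_inner_smul_left]
            ring
    -- term bounds
    have hterm1 : a₁ * ⟪u₁ - w₁, e⟫ ≤ 0 := by
      have hd := hσ₁Diss s₁ hs₁ x y₁ z₁ z₂
      have h9 : (0:ℝ) ≤ β₂ * ‖z₁ - z₂‖ ^ 2 := by positivity
      have : ⟪u₁ - w₁, e⟫ ≤ 0 := le_trans hd (by linarith)
      exact mul_nonpos_of_nonneg_of_nonpos ha₁0 this
    have hmul_help : ∀ (X B : ℝ), X ≤ B → 0 ≤ B → ∀ a : ℝ, 0 ≤ a → a ≤ M → a * X ≤ M * B := by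
      intro X B hXB hB a ha0 haM
      calc a * X ≤ a * B := mul_le_mul_of_nonneg_left hXB ha0
        _ ≤ M * B := mul_le_mul_of_nonneg_right haM hB
    have hterm2 : a₁ * ⟪w₁ - w₂, e⟫ ≤ M * (ρ δ * ‖e‖) := by
      have hbase : ‖w₁ - w₂‖ ≤ ρ δ := by
        rw [norm_sub_rev]
        exact hρ δ hδ0 s₁ hs₁ s₂ hs₂ le_rfl x y₁ z₂
      have h1 : ⟪w₁ - w₂, e⟫ ≤ ρ δ * ‖e‖ :=
        le_trans (real_inner_le_norm _ _) (mul_le_mul_of_nonneg_right hbase (norm_nonneg e))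
      exact hmul_help _ _ h1 (by positivity) a₁ ha₁0 ha₁M
    have hterm3 : a₁ * ⟪w₂ - u₂, e⟫ ≤ M * (K * (M * δ) * ‖e‖) := by
      have hbase : ‖w₂ - u₂‖ ≤ K * (M * δ) := by
        have h1 := hrowLip s₂ hs₂ x x y₁ y₂ z₂ z₂
        simp only [sub_self, norm_zero, add_zero, zero_add] at h1
        have h2 : |y₁ - y₂| ≤ M * δ := by
          rw [hy₁def, hy₂def]
          have : y + φ s₁ x - (y + φ s₂ x) = φ s₁ x - φ s₂ x := by ring
          rw [this]
          exact hφtime s₁ s₂ x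
        calc ‖w₂ - u₂‖ ≤ K * |y₁ - y₂| := h1
          _ ≤ K * (M * δ) := mul_le_mul_of_nonneg_left h2 hK
      have h1 : ⟪w₂ - u₂, e⟫ ≤ K * (M * δ) * ‖e‖ :=
        le_trans (real_inner_le_norm _ _) (mul_le_mul_of_nonneg_right hbase (norm_nonneg e))
      exact hmul_help _ _ h1 (by positivity) a₁ ha₁0 ha₁M
    have hterm4 : (a₁ - a₂) * ⟪u₂, e⟫ ≤ M * δ * (L * S * ‖e‖) := by
      have hu₂b : ‖u₂‖ ≤ L * S := by
        rw [hSdef]; exact hrowGrowth s₂ hs₂ x y₂ z₂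
      have habs : |⟪u₂, e⟫| ≤ L * S * ‖e‖ := by
        refine le_trans (abs_real_inner_le_norm _ _) ?_
        exact mul_le_mul_of_nonneg_right hu₂b (norm_nonneg e)
      calc (a₁ - a₂) * ⟪u₂, e⟫ ≤ |(a₁ - a₂) * ⟪u₂, e⟫| := le_abs_self _
        _ = |a₁ - a₂| * |⟪u₂, e⟫| := abs_mul _ _
        _ ≤ M * δ * (L * S * ‖e‖) := by
            refine mul_le_mul (ha_diff s₁ s₂ x) habs (abs_nonneg _) (by positivity)
    -- combine
    have hB0 : 0 ≤ M * ρ δ + M * (K * (M * δ)) + M * δ * (L * S) := by positivity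
    have h5 : ‖e‖ ^ 2 ≤ (M * ρ δ + M * (K * (M * δ)) + M * δ * (L * S)) * ‖e‖ := by
      rw [hinner]
      calc a₁ * ⟪u₁ - w₁, e⟫ + a₁ * ⟪w₁ - w₂, e⟫ + a₁ * ⟪w₂ - u₂, e⟫ + (a₁ - a₂) * ⟪u₂, e⟫
          ≤ 0 + M * (ρ δ * ‖e‖) + M * (K * (M * δ) * ‖e‖) + M * δ * (L * S * ‖e‖) :=
            add_le_add (add_le_add (add_le_add hterm1 hterm2) hterm3) hterm4
        _ = (M * ρ δ + M * (K * (M * δ)) + M * δ * (L * S)) * ‖e‖ := by ring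
    have henorm : ‖e‖ ≤ M * ρ δ + M * (K * (M * δ)) + M * δ * (L * S) := by
      rcases eq_or_lt_of_le (norm_nonneg e) with h0 | h0
      · rw [← h0]; exact hB0
      · rw [pow_two] at h5
        exact (mul_le_mul_iff_left₀ h0).mp h5
    -- final
    have h6 : M * (K * (M * δ)) ≤ K * M ^ 2 * (δ * A) := aux_6 hK hM hδ0 hA1
    have h7 : M * δ * (L * S) ≤ M * L * C₁ * (δ * A) := by
      have h8 : L * S ≤ L * (C₁ * A) := mul_le_mul_of_nonneg_left hS hL
      have h9 : M * δ * (L * S) ≤ M * δ * (L * (C₁ * A)) :=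
        mul_le_mul_of_nonneg_left h8 (mul_nonneg hM hδ0)
      linarith [h9]
    have h8 : M * ρ δ ≤ C * ρ δ := by
      refine mul_le_mul_of_nonneg_right ?_ hρδ0
      have h1 : (0:ℝ) ≤ K * M ^ 2 := mul_nonneg hK (sq_nonneg M)
      have h2 : (0:ℝ) ≤ M * L * C₁ := mul_nonneg (mul_nonneg hM hL) (by linarith)
      rw [hCdef]; linarith
    have h9 : K * M ^ 2 * (δ * A) + M * L * C₁ * (δ * A) ≤ C * δ * A := by
      have hδA : 0 ≤ δ * A := mul_nonneg hδ0 (by linarith)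
      have h1 : (0:ℝ) ≤ (M + 1) * (δ * A) := mul_nonneg (by linarith) hδA
      rw [hCdef]; linarith
    calc ‖z₁ - z₂‖ = ‖e‖ := by rw [hedef]
      _ ≤ M * ρ δ + M * (K * (M * δ)) + M * δ * (L * S) := henorm
      _ ≤ C * δ * A + C * ρ δ := by linarith
      _ = C * |s₁ - s₂| * (1 + ‖x‖ + |y| + ‖ζ‖) + C * ρ |s₁ - s₂| := by
          rw [hδdef, hAdef]
  refine ⟨⟨C, hC0, key⟩, ?_⟩
  -- continuity
  intro x y ζ h hh
  intro s hs
  rw [Metric.continuousWithinAt_iff]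
  intro ε hε
  set A : ℝ := 1 + ‖x‖ + |y| + ‖ζ‖ with hAdef
  have hA1 : 1 ≤ A := by rw [hAdef]; linarith [norm_nonneg x, abs_nonneg y, norm_nonneg ζ]
  have hA0 : 0 < A := by linarith
  obtain ⟨δ₁, hδ₁0, hδ₁⟩ := Metric.tendsto_nhdsWithin_nhds.mp hρ0 (ε / (2 * C))
    (by positivity)
  refine ⟨min δ₁ (ε / (2 * C * A)), lt_min hδ₁0 (by positivity), ?_⟩
  intro t ht hdist
  rcases eq_or_ne t s with rfl | hne
  · simpa using hε
  have htdist : |t - s| < min δ₁ (ε / (2 * C * A)) := by rwa [Real.dist_eq] at hdist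
  have htpos : 0 < |t - s| := abs_pos.mpr (sub_ne_zero.mpr hne)
  have hρsmall : ρ |t - s| < ε / (2 * C) := by
    have := hδ₁ (Set.mem_Ioi.mpr htpos)
      (by rw [Real.dist_eq, sub_zero, abs_of_pos htpos]; exact lt_of_lt_of_le htdist (min_le_left _ _))
    rw [Real.dist_eq, sub_zero] at this
    exact lt_of_le_of_lt (le_abs_self _) this
  have hest := key t ht s hs x y ζ (h t) (h s) (hh t ht) (hh s hs)
  rw [dist_eq_norm]
  calc ‖h t - h s‖ ≤ C * |t - s| * A + C * ρ |t - s| := hest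
    _ < C * (ε / (2 * C * A)) * A + C * (ε / (2 * C)) := by
        have h1 : C * |t - s| * A < C * (ε / (2 * C * A)) * A := by
          have := lt_of_lt_of_le htdist (min_le_right _ _)
          have h2 : C * |t - s| < C * (ε / (2 * C * A)) :=
            (mul_lt_mul_iff_right₀ hC0).mpr this
          exact (mul_lt_mul_iff_left₀ hA0).mpr h2
        have h3 : C * ρ |t - s| ≤ C * (ε / (2 * C)) := by
          exact le_of_lt ((mul_lt_mul_iff_right₀ hC0).mpr hρsmall)
        linarith
    _ = ε / 2 + ε / 2 := by field_simp
    _ = ε := by ring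
end

section
/- In the algebraic-equation setting, there exists a constant C, depending only on K, L, M, β₂, T and sup_{s∈[0,T]}|φ(s,0)|, with the following property: for all s ∈ [0,T], x, x̄ ∈ ℝⁿ, y ∈ ℝ and ζ ∈ ℝ^d, if ẑ, z̄ ∈ ℝ^d satisfy ẑ = ζ + D_xφ(s,x)·σ(s, x, y + φ(s,x), ẑ) and z̄ = ζ + D_xφ(s,x̄)·σ(s, x̄, y + φ(s,x̄), z̄), then |z̄ − ẑ| ≤ C(1 + |x̄|)|x̄ − x| + C|x̄ − x|(|y| + |z̄|). -/
open RealInnerProductSpace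

set_option maxHeartbeats 1000000 in

/-- **Spatial-Lipschitz estimate for the algebraic equation (proof of Lemma 4.6).**
In the algebraic-equation setting, there is a constant `C`, depending only on the data, such
that if `zHat` solves the algebraic equation at `(s, x, y, ζ)` and `zBar` solves it at
`(s, x', y, ζ)`, then `‖zBar - zHat‖ ≤ C (1 + ‖x'‖) ‖x' - x‖ + C ‖x' - x‖ (|y| + ‖zBar‖)`.
Dimensions `n ≥ 1` and `d ≥ 1` are encoded as `n + 1` and `d + 1`; the matrix `σ` is encoded
through its rows `σ t x y z i ∈ ℝ^d`. -/
theorem algebraic_equation_spatial_lipschitz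
    (n d : ℕ) (T K L M β₂ : ℝ)
    (hT : 0 < T) (hK : 0 ≤ K) (hL : 0 ≤ L) (hM : 0 ≤ M) (hβ₂ : 0 < β₂)
    (σ : ℝ → EuclideanSpace ℝ (Fin (n + 1)) → ℝ → EuclideanSpace ℝ (Fin (d + 1)) →
      Fin (n + 1) → EuclideanSpace ℝ (Fin (d + 1)))
    (φ : ℝ → EuclideanSpace ℝ (Fin (n + 1)) → ℝ)
    (hσLip : ∀ t ∈ Set.Icc (0 : ℝ) T, ∀ x x' y y' z z',
      ‖σ t x y z - σ t x' y' z'‖ ≤ K * (‖x - x'‖ + |y - y'| + ‖z - z'‖))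
    (hσGrowth : ∀ t ∈ Set.Icc (0 : ℝ) T, ∀ x y z,
      ‖σ t x y z‖ ≤ L * (1 + ‖x‖ + |y| + ‖z‖))
    (hσ₁Diss : ∀ t ∈ Set.Icc (0 : ℝ) T, ∀ x y z z',
      ⟪σ t x y z 0 - σ t x y z' 0, z - z'⟫ ≤ -β₂ * ‖z - z'‖ ^ 2)
    (hφ : ContDiff ℝ 3 (fun p : ℝ × EuclideanSpace ℝ (Fin (n + 1)) => φ p.1 p.2))
    (hφBound : ∀ i : ℕ, 1 ≤ i → i ≤ 3 →
      ∀ p : ℝ × EuclideanSpace ℝ (Fin (n + 1)),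
        ‖iteratedFDeriv ℝ i (fun q : ℝ × EuclideanSpace ℝ (Fin (n + 1)) => φ q.1 q.2) p‖ ≤ M)
    (hφMono : ∀ s ∈ Set.Icc (0 : ℝ) T, ∀ x : EuclideanSpace ℝ (Fin (n + 1)),
      0 ≤ fderiv ℝ (φ s) x (EuclideanSpace.single 0 1) ∧
      ∀ i : Fin (n + 1), i ≠ 0 → fderiv ℝ (φ s) x (EuclideanSpace.single i 1) = 0) :
    ∃ C : ℝ, 0 < C ∧ ∀ s ∈ Set.Icc (0 : ℝ) T,
      ∀ (x x' : EuclideanSpace ℝ (Fin (n + 1))) (y : ℝ)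
        (ζ zHat zBar : EuclideanSpace ℝ (Fin (d + 1))),
      zHat = ζ + ∑ i : Fin (n + 1),
        fderiv ℝ (φ s) x (EuclideanSpace.single i 1) • σ s x (y + φ s x) zHat i →
      zBar = ζ + ∑ i : Fin (n + 1),
        fderiv ℝ (φ s) x' (EuclideanSpace.single i 1) • σ s x' (y + φ s x') zBar i →
      ‖zBar - zHat‖ ≤ C * (1 + ‖x'‖) * ‖x' - x‖ + C * ‖x' - x‖ * (|y| + ‖zBar‖) := by
  classical
  set F : ℝ × EuclideanSpace ℝ (Fin (n + 1)) → ℝ := fun p => φ p.1 p.2 with hFdef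
  have hFdiff : Differentiable ℝ F := hφ.differentiable (by norm_num)
  -- bound on the first derivative of F
  have hfd1 : ∀ p, ‖fderiv ℝ F p‖ ≤ M := by
    intro p
    calc ‖fderiv ℝ F p‖ = ‖iteratedFDeriv ℝ 0 (fderiv ℝ F) p‖ :=
          (norm_iteratedFDeriv_zero).symm
      _ = ‖iteratedFDeriv ℝ (0 + 1) F p‖ := norm_iteratedFDeriv_fderiv
      _ ≤ M := hφBound 1 le_rfl (by norm_num) p
  -- the first derivative of F is M-Lipschitz
  have hfd2 : ∀ p q, ‖fderiv ℝ F p - fderiv ℝ F q‖ ≤ M * ‖p - q‖ := by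
    intro p q
    have hC3 : ContDiff ℝ 2 (fderiv ℝ F) := hφ.fderiv_right (by norm_num)
    have hdiff : ∀ r ∈ (Set.univ : Set (ℝ × EuclideanSpace ℝ (Fin (n + 1)))),
        DifferentiableAt ℝ (fderiv ℝ F) r := fun r _ =>
      (hC3.differentiable (by norm_num)) r
    have hbd : ∀ r ∈ (Set.univ : Set (ℝ × EuclideanSpace ℝ (Fin (n + 1)))),
        ‖fderiv ℝ (fderiv ℝ F) r‖ ≤ M := by
      intro r _
      calc ‖fderiv ℝ (fderiv ℝ F) r‖
          = ‖iteratedFDeriv ℝ 0 (fderiv ℝ (fderiv ℝ F)) r‖ := by rw [norm_iteratedFDeriv_zero]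
        _ = ‖iteratedFDeriv ℝ (0 + 1) (fderiv ℝ F) r‖ := norm_iteratedFDeriv_fderiv
        _ = ‖iteratedFDeriv ℝ (0 + 1 + 1) F r‖ := norm_iteratedFDeriv_fderiv
        _ ≤ M := hφBound 2 (by norm_num) (by norm_num) r
    exact Convex.norm_image_sub_le_of_norm_fderiv_le hdiff hbd convex_univ (Set.mem_univ q)
      (Set.mem_univ p)
  -- F is M-Lipschitz
  have hFlip : ∀ p q, ‖F p - F q‖ ≤ M * ‖p - q‖ := by
    intro p q
    exact Convex.norm_image_sub_le_of_norm_fderiv_le (fun r _ => hFdiff r)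
      (fun r _ => hfd1 r) convex_univ (Set.mem_univ q) (Set.mem_univ p)
  -- relation between partial derivative and full derivative
  have hrel : ∀ (s : ℝ) (x : EuclideanSpace ℝ (Fin (n + 1))),
      fderiv ℝ (φ s) x = (fderiv ℝ F (s, x)).comp
        (ContinuousLinearMap.inr ℝ ℝ (EuclideanSpace ℝ (Fin (n + 1)))) := by
    intro s x
    have h1 : HasFDerivAt (fun x' : EuclideanSpace ℝ (Fin (n + 1)) => (s, x'))
        (ContinuousLinearMap.inr ℝ ℝ (EuclideanSpace ℝ (Fin (n + 1)))) x :=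
      hasFDerivAt_prodMk_right s x
    have h2 : HasFDerivAt F (fderiv ℝ F (s, x)) (s, x) := (hFdiff (s, x)).hasFDerivAt
    have h3 := h2.comp x h1
    exact h3.fderiv
  -- prod norm of (0, v)
  have hpn : ∀ v : EuclideanSpace ℝ (Fin (n + 1)),
      ‖((0 : ℝ), v)‖ = ‖v‖ := by
    intro v
    rw [Prod.norm_def]
    simp [norm_nonneg]
  -- bound on φ(s, 0) on the compact interval
  obtain ⟨B₀, hB₀⟩ : ∃ B₀, ∀ s ∈ Set.Icc (0 : ℝ) T, ‖φ s 0‖ ≤ B₀ := by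
    have hc : ContinuousOn (fun s : ℝ => F (s, 0)) (Set.Icc 0 T) :=
      (hφ.continuous.comp (continuous_id.prodMk continuous_const)).continuousOn
    exact (isCompact_Icc).exists_bound_of_continuousOn hc
  set B : ℝ := max B₀ 0 with hBdef
  have hB : 0 ≤ B := le_max_right _ _
  have hBb : ∀ s ∈ Set.Icc (0 : ℝ) T, |φ s 0| ≤ B := fun s hs =>
    le_trans (hB₀ s hs) (le_max_left _ _)
  -- the constant
  set C : ℝ := M * K * (1 + M) + M * L * (2 + B + M) + 1 with hCdef
  have hC : 0 < C := by positivity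
  refine ⟨C, hC, ?_⟩
  intro s hs x x' y ζ zHat zBar hHat hBar
  set e0 : EuclideanSpace ℝ (Fin (n + 1)) := EuclideanSpace.single 0 1 with he0
  set a : ℝ := fderiv ℝ (φ s) x e0 with ha
  set a' : ℝ := fderiv ℝ (φ s) x' e0 with ha'
  have ha0 : 0 ≤ a := (hφMono s hs x).1
  -- sum collapses
  have hsum : ∀ (xx : EuclideanSpace ℝ (Fin (n + 1))) (yv : ℝ)
      (z : EuclideanSpace ℝ (Fin (d + 1))),
      (∑ i : Fin (n + 1), fderiv ℝ (φ s) xx (EuclideanSpace.single i 1) • σ s xx yv z i)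
        = fderiv ℝ (φ s) xx (EuclideanSpace.single 0 1) • σ s xx yv z 0 := by
    intro xx yv z
    refine Finset.sum_eq_single 0 ?_ ?_
    · intro i _ hi
      rw [(hφMono s hs xx).2 i hi, zero_smul]
    · intro h; exact absurd (Finset.mem_univ _) h
  set S : EuclideanSpace ℝ (Fin (d + 1)) := σ s x (y + φ s x) zHat 0 with hS
  set S2 : EuclideanSpace ℝ (Fin (d + 1)) := σ s x (y + φ s x) zBar 0 with hS2
  set S' : EuclideanSpace ℝ (Fin (d + 1)) := σ s x' (y + φ s x') zBar 0 with hS'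
  have hHat' : zHat = ζ + a • S := by rw [hHat, hsum]
  have hBar' : zBar = ζ + a' • S' := by rw [hBar, hsum]
  have hΔ : zBar - zHat = a • (S2 - S) + (a • (S' - S2) + (a' - a) • S') := by
    rw [hHat', hBar']; module
  set D : ℝ := ‖zBar - zHat‖ with hD
  have hD0 : 0 ≤ D := norm_nonneg _
  set dx : ℝ := ‖x' - x‖ with hdx
  have hdx0 : 0 ≤ dx := norm_nonneg _
  -- |a| ≤ M and |a' - a| ≤ M dx
  have haM : |a| ≤ M := by
    rw [ha, hrel]
    calc |(fderiv ℝ F (s, x)).comp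
          (ContinuousLinearMap.inr ℝ ℝ (EuclideanSpace ℝ (Fin (n + 1)))) e0|
        = ‖fderiv ℝ F (s, x) ((0 : ℝ), e0)‖ := by
          simp [ContinuousLinearMap.comp_apply]
      _ ≤ ‖fderiv ℝ F (s, x)‖ * ‖((0 : ℝ), e0)‖ := (fderiv ℝ F (s, x)).le_opNorm _
      _ = ‖fderiv ℝ F (s, x)‖ := by rw [hpn, he0, EuclideanSpace.norm_single]; simp
      _ ≤ M := hfd1 _
  have haa : |a' - a| ≤ M * dx := by
    rw [ha, ha', hrel, hrel]
    have h1 : |((fderiv ℝ F (s, x')).comp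
          (ContinuousLinearMap.inr ℝ ℝ (EuclideanSpace ℝ (Fin (n + 1))))) e0 -
        ((fderiv ℝ F (s, x)).comp
          (ContinuousLinearMap.inr ℝ ℝ (EuclideanSpace ℝ (Fin (n + 1))))) e0|
        = ‖(fderiv ℝ F (s, x') - fderiv ℝ F (s, x)) ((0 : ℝ), e0)‖ := by
      simp [ContinuousLinearMap.comp_apply, ContinuousLinearMap.sub_apply]
    rw [h1]
    calc ‖(fderiv ℝ F (s, x') - fderiv ℝ F (s, x)) ((0 : ℝ), e0)‖
        ≤ ‖fderiv ℝ F (s, x') - fderiv ℝ F (s, x)‖ * ‖((0 : ℝ), e0)‖ :=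
          (fderiv ℝ F (s, x') - fderiv ℝ F (s, x)).le_opNorm _
      _ = ‖fderiv ℝ F (s, x') - fderiv ℝ F (s, x)‖ := by
          rw [hpn, he0, EuclideanSpace.norm_single]; simp
      _ ≤ M * ‖((s, x') : ℝ × EuclideanSpace ℝ (Fin (n + 1))) - (s, x)‖ := hfd2 _ _
      _ = M * dx := by
          congr 1
          have : ((s, x') : ℝ × EuclideanSpace ℝ (Fin (n + 1))) - (s, x) = (0, x' - x) := by
            simp [Prod.ext_iff]
          rw [this, hpn]
  -- φ is M-Lipschitz in x
  have hφlip : |φ s x' - φ s x| ≤ M * dx := by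
    have := hFlip (s, x') (s, x)
    have h2 : ((s, x') : ℝ × EuclideanSpace ℝ (Fin (n + 1))) - (s, x) = (0, x' - x) := by
      simp [Prod.ext_iff]
    rw [h2, hpn] at this
    simpa [hFdef, Real.norm_eq_abs] using this
  -- bound on |y + φ s x'|
  have hy' : |y + φ s x'| ≤ |y| + B + M * ‖x'‖ := by
    have h1 : |φ s x' - φ s 0| ≤ M * ‖x'‖ := by
      have := hFlip (s, x') (s, 0)
      have h2 : ((s, x') : ℝ × EuclideanSpace ℝ (Fin (n + 1))) - (s, 0) = (0, x') := by
        simp [Prod.ext_iff]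
      rw [h2, hpn] at this
      simpa [hFdef, Real.norm_eq_abs] using this
    have h3 := hBb s hs
    calc |y + φ s x'| ≤ |y| + |φ s x'| := abs_add_le _ _
      _ = |y| + |φ s 0 + (φ s x' - φ s 0)| := by ring_nf
      _ ≤ |y| + (|φ s 0| + |φ s x' - φ s 0|) := by
          gcongr; exact abs_add_le _ _
      _ ≤ |y| + (B + M * ‖x'‖) := by gcongr
      _ = |y| + B + M * ‖x'‖ := by ring
  -- bound on ‖S' - S2‖
  have hS'S2 : ‖S' - S2‖ ≤ K * ((1 + M) * dx) := by
    have h1 := hσLip s hs x' x (y + φ s x') (y + φ s x) zBar zBar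
    have h2 : ‖S' - S2‖ ≤ ‖σ s x' (y + φ s x') zBar - σ s x (y + φ s x) zBar‖ := by
      have := norm_le_pi_norm (σ s x' (y + φ s x') zBar - σ s x (y + φ s x) zBar) 0
      simpa [hS', hS2] using this
    have h3 : |y + φ s x' - (y + φ s x)| ≤ M * dx := by
      have : y + φ s x' - (y + φ s x) = φ s x' - φ s x := by ring
      rw [this]; exact hφlip
    calc ‖S' - S2‖ ≤ K * (‖x' - x‖ + |y + φ s x' - (y + φ s x)| + ‖zBar - zBar‖) :=
          le_trans h2 h1
      _ = K * (dx + |y + φ s x' - (y + φ s x)|) := by simp [hdx]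
      _ ≤ K * (dx + M * dx) := by gcongr
      _ = K * ((1 + M) * dx) := by ring
  -- bound on ‖S'‖
  have hS'b : ‖S'‖ ≤ L * (1 + ‖x'‖ + (|y| + B + M * ‖x'‖) + ‖zBar‖) := by
    have h1 := hσGrowth s hs x' (y + φ s x') zBar
    have h2 : ‖S'‖ ≤ ‖σ s x' (y + φ s x') zBar‖ := by
      simpa [hS'] using norm_le_pi_norm (σ s x' (y + φ s x') zBar) 0
    calc ‖S'‖ ≤ L * (1 + ‖x'‖ + |y + φ s x'| + ‖zBar‖) := le_trans h2 h1
      _ ≤ L * (1 + ‖x'‖ + (|y| + B + M * ‖x'‖) + ‖zBar‖) := by gcongr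
  -- the inner-product estimate
  have hkey : D ^ 2 ≤ (M * (K * ((1 + M) * dx)) +
      (M * dx) * (L * (1 + ‖x'‖ + (|y| + B + M * ‖x'‖) + ‖zBar‖))) * D := by
    have hinner : (D : ℝ) ^ 2 = ⟪a • (S2 - S), zBar - zHat⟫ +
        (⟪a • (S' - S2), zBar - zHat⟫ + ⟪(a' - a) • S', zBar - zHat⟫) := by
      rw [hD, ← real_inner_self_eq_norm_sq]
      nth_rewrite 1 [hΔ]
      rw [inner_add_left, inner_add_left]
    have t1 : ⟪a • (S2 - S), zBar - zHat⟫ ≤ 0 := by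
      rw [real_inner_smul_left]
      have hdiss := hσ₁Diss s hs x (y + φ s x) zBar zHat
      have hd2 : ⟪S2 - S, zBar - zHat⟫ ≤ 0 := by
        refine le_trans hdiss ?_
        have : 0 ≤ β₂ * ‖zBar - zHat‖ ^ 2 := by positivity
        linarith
      exact mul_nonpos_of_nonneg_of_nonpos ha0 hd2
    have t2 : ⟪a • (S' - S2), zBar - zHat⟫ ≤ M * (K * ((1 + M) * dx)) * D := by
      rw [real_inner_smul_left]
      calc a * ⟪S' - S2, zBar - zHat⟫ ≤ |a * ⟪S' - S2, zBar - zHat⟫| := le_abs_self _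
        _ = |a| * |⟪S' - S2, zBar - zHat⟫| := abs_mul _ _
        _ ≤ M * (‖S' - S2‖ * ‖zBar - zHat‖) := by
            apply mul_le_mul haM (abs_real_inner_le_norm _ _) (abs_nonneg _) hM
        _ ≤ M * (K * ((1 + M) * dx) * D) := by
            rw [← hD]; gcongr
        _ = M * (K * ((1 + M) * dx)) * D := by ring
    have t3 : ⟪(a' - a) • S', zBar - zHat⟫ ≤
        (M * dx) * (L * (1 + ‖x'‖ + (|y| + B + M * ‖x'‖) + ‖zBar‖)) * D := by
      rw [real_inner_smul_left]
      calc (a' - a) * ⟪S', zBar - zHat⟫ ≤ |(a' - a) * ⟪S', zBar - zHat⟫| := le_abs_self _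
        _ = |a' - a| * |⟪S', zBar - zHat⟫| := abs_mul _ _
        _ ≤ (M * dx) * (‖S'‖ * ‖zBar - zHat‖) := by
            apply mul_le_mul haa (abs_real_inner_le_norm _ _) (abs_nonneg _)
            positivity
        _ ≤ (M * dx) * (L * (1 + ‖x'‖ + (|y| + B + M * ‖x'‖) + ‖zBar‖) * D) := by
            rw [← hD]; gcongr
        _ = (M * dx) * (L * (1 + ‖x'‖ + (|y| + B + M * ‖x'‖) + ‖zBar‖)) * D := by ring
    rw [hinner]
    have := add_le_add t1 (add_le_add t2 t3)
    linarith
  set R : ℝ := M * (K * ((1 + M) * dx)) +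
      (M * dx) * (L * (1 + ‖x'‖ + (|y| + B + M * ‖x'‖) + ‖zBar‖)) with hR
  have hR0 : 0 ≤ R := by
    rw [hR]
    have h1 : (0:ℝ) ≤ |y| := abs_nonneg _
    positivity
  have hDR : D ≤ R := by
    rcases eq_or_lt_of_le hD0 with h | h
    · linarith
    · nlinarith [hkey]
  -- final arithmetic
  have hfin : R ≤ C * (1 + ‖x'‖) * dx + C * dx * (|y| + ‖zBar‖) := by
    have h1 : (0:ℝ) ≤ |y| := abs_nonneg _
    have h2 : (0:ℝ) ≤ ‖x'‖ := norm_nonneg _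
    have h3 : (0:ℝ) ≤ ‖zBar‖ := norm_nonneg _
    have hbr : M * (K * (1 + M)) + M * (L * (1 + ‖x'‖ + (|y| + B + M * ‖x'‖) + ‖zBar‖))
        ≤ C * (1 + ‖x'‖) + C * (|y| + ‖zBar‖) := by
      rw [hCdef]
      nlinarith [mul_nonneg (mul_nonneg hM hK) h2, mul_nonneg (mul_nonneg hM hK) h1,
        mul_nonneg (mul_nonneg hM hK) h3,
        mul_nonneg (mul_nonneg (mul_nonneg hM hK) hM) h2,
        mul_nonneg (mul_nonneg (mul_nonneg hM hK) hM) h1,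
        mul_nonneg (mul_nonneg (mul_nonneg hM hK) hM) h3,
        mul_nonneg (mul_nonneg hM hL) hM,
        mul_nonneg (mul_nonneg hM hL) h2,
        mul_nonneg (mul_nonneg (mul_nonneg hM hL) hB) h2,
        mul_nonneg (mul_nonneg hM hL) h1,
        mul_nonneg (mul_nonneg (mul_nonneg hM hL) hB) h1,
        mul_nonneg (mul_nonneg (mul_nonneg hM hL) hM) h1,
        mul_nonneg (mul_nonneg hM hL) h3,
        mul_nonneg (mul_nonneg (mul_nonneg hM hL) hB) h3,
        mul_nonneg (mul_nonneg (mul_nonneg hM hL) hM) h3]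
    calc R = dx * (M * (K * (1 + M)) +
          M * (L * (1 + ‖x'‖ + (|y| + B + M * ‖x'‖) + ‖zBar‖))) := by rw [hR]; ring
      _ ≤ dx * (C * (1 + ‖x'‖) + C * (|y| + ‖zBar‖)) :=
          mul_le_mul_of_nonneg_left hbr hdx0
      _ = C * (1 + ‖x'‖) * dx + C * dx * (|y| + ‖zBar‖) := by ring
  calc ‖zBar - zHat‖ = D := rfl
    _ ≤ R := hDR
    _ ≤ C * (1 + ‖x'‖) * dx + C * dx * (|y| + ‖zBar‖) := hfin
end

section
/- In the Case-2 setting, there exists a constant C, depending only on K, L, M, n, d, T and sup_{s∈[0,T]}|φ(s,0)|, such that for all (s,u) ∈ [0,T]×U, x, x̄ ∈ ℝⁿ, y ∈ ℝ and z ∈ ℝ^d: |L(s,x,y,z,u) − L(s,x̄,y,z,u)| ≤ C(1 + |x̄|² + |y|² + |z|²)·(|x − x̄| + |x − x̄|²). -/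
open RealInnerProductSpace

set_option synthInstance.maxHeartbeats 1000000
set_option maxHeartbeats 2000000
set_option linter.unusedVariables false

noncomputable def PhiFun {m : ℕ} (φ : ℝ → EuclideanSpace ℝ (Fin m) → ℝ) :
    ℝ × EuclideanSpace ℝ (Fin m) → ℝ := fun p => φ p.1 p.2

section hl
variable {E : Type*} [NormedAddCommGroup E] [NormedSpace ℝ E]
variable {F : Type*} [NormedAddCommGroup F] [NormedSpace ℝ F]

lemma lip_of_bound' {f : E → F} {M : ℝ}
    (hf : Differentiable ℝ f) (hb : ∀ p, ‖fderiv ℝ f p‖ ≤ M) (p q : E) :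
    ‖f p - f q‖ ≤ M * ‖p - q‖ :=
  Convex.norm_image_sub_le_of_norm_fderiv_le (fun x _ => hf x) (fun x _ => hb x)
    convex_univ (Set.mem_univ q) (Set.mem_univ p)

lemma lip_of_bound_iter {f : E → F} {M : ℝ}
    (hf : Differentiable ℝ f) (hb : ∀ p, ‖iteratedFDeriv ℝ 1 f p‖ ≤ M) (p q : E) :
    ‖f p - f q‖ ≤ M * ‖p - q‖ :=
  lip_of_bound' hf (fun p => (norm_iteratedFDeriv_one f).symm.trans_le (hb p)) p q
end hl

lemma coord_abs_le_norm {m : ℕ} (v : EuclideanSpace ℝ (Fin m)) (i : Fin m) :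
    |v i| ≤ ‖v‖ := by
  have h := abs_real_inner_le_norm (EuclideanSpace.single i (1:ℝ)) v
  rw [EuclideanSpace.inner_single_left] at h
  simpa [EuclideanSpace.norm_single] using h

lemma prod_diff_bound {a b c d A B C' D : ℝ}
    (h1 : |a - c| ≤ A) (h2 : |b| ≤ B) (h3 : |c| ≤ C') (h4 : |b - d| ≤ D) :
    |a * b - c * d| ≤ A * B + C' * D := by
  have e : a * b - c * d = (a - c) * b + c * (b - d) := by ring
  rw [e]
  refine (abs_add_le _ _).trans ?_
  rw [abs_mul, abs_mul]
  exact add_le_add (mul_le_mul h1 h2 (abs_nonneg _) ((abs_nonneg _).trans h1))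
    (mul_le_mul h3 h4 (abs_nonneg _) ((abs_nonneg _).trans h3))

lemma inner_diff_bound {k : ℕ} (v v' w w' : EuclideanSpace ℝ (Fin k)) :
    |⟪v, w⟫ - ⟪v', w'⟫| ≤ ‖v - v'‖ * ‖w‖ + ‖v'‖ * ‖w - w'‖ := by
  have e : ⟪v, w⟫ - ⟪v', w'⟫ = ⟪v - v', w⟫ + ⟪v', w - w'⟫ := by
    rw [inner_sub_left, inner_sub_right]; ring
  rw [e]
  exact (abs_add_le _ _).trans
    (add_le_add (abs_real_inner_le_norm _ _) (abs_real_inner_le_norm _ _))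

section phi
variable {m : ℕ} {φ : ℝ → EuclideanSpace ℝ (Fin m) → ℝ} {M : ℝ}

lemma partial_t (hφ : ContDiff ℝ 3 (PhiFun φ)) (s : ℝ) (x : EuclideanSpace ℝ (Fin m)) :
    deriv (fun t => φ t x) s = fderiv ℝ (PhiFun φ) (s, x) (1, 0) := by
  have hd : Differentiable ℝ (PhiFun φ) := hφ.differentiable (by norm_num)
  have h1 : HasDerivAt (fun t : ℝ => ((t, x) : ℝ × EuclideanSpace ℝ (Fin m))) (1, 0) s :=
    HasDerivAt.prodMk (hasDerivAt_id s) (hasDerivAt_const s x)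
  have h2 := (hd (s, x)).hasFDerivAt.comp_hasDerivAt s h1
  have h3 : HasDerivAt (fun t => φ t x) (fderiv ℝ (PhiFun φ) (s, x) (1, 0)) s := h2
  exact h3.deriv

lemma partial_x (hφ : ContDiff ℝ 3 (PhiFun φ)) (s : ℝ) (x v : EuclideanSpace ℝ (Fin m)) :
    fderiv ℝ (φ s) x v = fderiv ℝ (PhiFun φ) (s, x) ((0 : ℝ), v) := by
  have hd : Differentiable ℝ (PhiFun φ) := hφ.differentiable (by norm_num)
  have h1 : HasFDerivAt (fun w : EuclideanSpace ℝ (Fin m) =>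
        ((s, w) : ℝ × EuclideanSpace ℝ (Fin m)))
      ((0 : EuclideanSpace ℝ (Fin m) →L[ℝ] ℝ).prod (ContinuousLinearMap.id ℝ _)) x :=
    HasFDerivAt.prodMk (hasFDerivAt_const s x) (hasFDerivAt_id x)
  have h2 : HasFDerivAt (φ s)
      ((fderiv ℝ (PhiFun φ) (s, x)).comp
        ((0 : EuclideanSpace ℝ (Fin m) →L[ℝ] ℝ).prod (ContinuousLinearMap.id ℝ _))) x :=
    (hd (s, x)).hasFDerivAt.comp x h1
  rw [h2.fderiv]
  simp

lemma partial_xx (hφ : ContDiff ℝ 3 (PhiFun φ)) (s : ℝ) (x w v : EuclideanSpace ℝ (Fin m)) :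
    fderiv ℝ (fun q : EuclideanSpace ℝ (Fin m) => fderiv ℝ (φ s) q v) x w
      = fderiv ℝ (fderiv ℝ (PhiFun φ)) (s, x) ((0 : ℝ), w) ((0 : ℝ), v) := by
  have hd2 : Differentiable ℝ (fderiv ℝ (PhiFun φ)) :=
    (hφ.fderiv_right (m := 2) (by norm_num)).differentiable (by norm_num)
  have hfun : (fun q : EuclideanSpace ℝ (Fin m) => fderiv ℝ (φ s) q v)
      = fun q : EuclideanSpace ℝ (Fin m) => fderiv ℝ (PhiFun φ) (s, q) ((0 : ℝ), v) := by
    funext q; exact partial_x hφ s q v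
  rw [hfun]
  have h1 : HasFDerivAt (fun w : EuclideanSpace ℝ (Fin m) =>
        ((s, w) : ℝ × EuclideanSpace ℝ (Fin m)))
      ((0 : EuclideanSpace ℝ (Fin m) →L[ℝ] ℝ).prod (ContinuousLinearMap.id ℝ _)) x :=
    HasFDerivAt.prodMk (hasFDerivAt_const s x) (hasFDerivAt_id x)
  have h2 : HasFDerivAt (fun q : EuclideanSpace ℝ (Fin m) => fderiv ℝ (PhiFun φ) (s, q))
      ((fderiv ℝ (fderiv ℝ (PhiFun φ)) (s, x)).comp
        ((0 : EuclideanSpace ℝ (Fin m) →L[ℝ] ℝ).prod (ContinuousLinearMap.id ℝ _))) x :=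
    (hd2 (s, x)).hasFDerivAt.comp x h1
  have h3 := h2.clm_apply
    (hasFDerivAt_const (((0 : ℝ), v) : ℝ × EuclideanSpace ℝ (Fin m)) x)
  rw [h3.fderiv]
  simp

lemma phiD1_bound (hb : ∀ p, ‖iteratedFDeriv ℝ 1 (PhiFun φ) p‖ ≤ M)
    (p : ℝ × EuclideanSpace ℝ (Fin m)) : ‖fderiv ℝ (PhiFun φ) p‖ ≤ M := by
  calc ‖fderiv ℝ (PhiFun φ) p‖
      = ‖iteratedFDeriv ℝ 0 (fderiv ℝ (PhiFun φ)) p‖ := (norm_iteratedFDeriv_zero).symm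
    _ = ‖iteratedFDeriv ℝ 1 (PhiFun φ) p‖ := norm_iteratedFDeriv_fderiv
    _ ≤ M := hb p

lemma phiD2_bound (hb : ∀ p, ‖iteratedFDeriv ℝ 2 (PhiFun φ) p‖ ≤ M)
    (p : ℝ × EuclideanSpace ℝ (Fin m)) : ‖fderiv ℝ (fderiv ℝ (PhiFun φ)) p‖ ≤ M := by
  calc ‖fderiv ℝ (fderiv ℝ (PhiFun φ)) p‖
      = ‖iteratedFDeriv ℝ 0 (fderiv ℝ (fderiv ℝ (PhiFun φ))) p‖ := by
        rw [norm_iteratedFDeriv_zero]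
    _ = ‖iteratedFDeriv ℝ 1 (fderiv ℝ (PhiFun φ)) p‖ := norm_iteratedFDeriv_fderiv
    _ = ‖iteratedFDeriv ℝ 2 (PhiFun φ) p‖ := norm_iteratedFDeriv_fderiv
    _ ≤ M := hb p

lemma phiD3_bound (hb : ∀ p, ‖iteratedFDeriv ℝ 3 (PhiFun φ) p‖ ≤ M)
    (p : ℝ × EuclideanSpace ℝ (Fin m)) :
    ‖iteratedFDeriv ℝ 1 (fderiv ℝ (fderiv ℝ (PhiFun φ))) p‖ ≤ M := by
  calc ‖iteratedFDeriv ℝ 1 (fderiv ℝ (fderiv ℝ (PhiFun φ))) p‖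
    _ = ‖iteratedFDeriv ℝ 2 (fderiv ℝ (PhiFun φ)) p‖ := norm_iteratedFDeriv_fderiv
    _ = ‖iteratedFDeriv ℝ 3 (PhiFun φ) p‖ := norm_iteratedFDeriv_fderiv
    _ ≤ M := hb p

lemma phi_lip (hφ : ContDiff ℝ 3 (PhiFun φ))
    (hb : ∀ p, ‖iteratedFDeriv ℝ 1 (PhiFun φ) p‖ ≤ M)
    (p q : ℝ × EuclideanSpace ℝ (Fin m)) :
    |PhiFun φ p - PhiFun φ q| ≤ M * ‖p - q‖ := by
  have h := lip_of_bound' (hφ.differentiable (by norm_num)) (phiD1_bound hb) p q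
  simpa using h

lemma phiD1_lip (hφ : ContDiff ℝ 3 (PhiFun φ))
    (hb : ∀ p, ‖iteratedFDeriv ℝ 2 (PhiFun φ) p‖ ≤ M)
    (p q : ℝ × EuclideanSpace ℝ (Fin m)) :
    ‖fderiv ℝ (PhiFun φ) p - fderiv ℝ (PhiFun φ) q‖ ≤ M * ‖p - q‖ :=
  lip_of_bound' ((hφ.fderiv_right (m := 2) (by norm_num)).differentiable (by norm_num))
    (phiD2_bound hb) p q

lemma phiD2_lip (hφ : ContDiff ℝ 3 (PhiFun φ))
    (hb : ∀ p, ‖iteratedFDeriv ℝ 3 (PhiFun φ) p‖ ≤ M)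
    (p q : ℝ × EuclideanSpace ℝ (Fin m)) :
    ‖fderiv ℝ (fderiv ℝ (PhiFun φ)) p - fderiv ℝ (fderiv ℝ (PhiFun φ)) q‖ ≤ M * ‖p - q‖ :=
  lip_of_bound_iter
    (((hφ.fderiv_right (m := 2) (by norm_num)).fderiv_right (m := 1)
      (by norm_num)).differentiable (by norm_num))
    (phiD3_bound hb) p q

end phi

lemma abs_sum_sub_sum_le {k : ℕ} (g h : Fin k → ℝ) {D : ℝ} (hD : ∀ i, |g i - h i| ≤ D) :
    |∑ i, g i - ∑ i, h i| ≤ (k : ℝ) * D := by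
  rw [← Finset.sum_sub_distrib]
  refine (Finset.abs_sum_le_sum_abs _ _).trans ?_
  calc ∑ i, |g i - h i| ≤ ∑ _i : Fin k, D := Finset.sum_le_sum (fun i _ => hD i)
    _ = (k : ℝ) * D := by simp [Finset.sum_const, Fintype.card_fin, nsmul_eq_mul]

lemma abs_split4 (a1 a2 a3 a4 b1 b2 b3 b4 : ℝ) :
    |a1 + a2 + (1/2) * a3 + a4 - (b1 + b2 + (1/2) * b3 + b4)|
      ≤ |a1 - b1| + |a2 - b2| + (1/2) * |a3 - b3| + |a4 - b4| := by
  have e : a1 + a2 + (1/2) * a3 + a4 - (b1 + b2 + (1/2) * b3 + b4)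
      = (a1 - b1) + ((a2 - b2) + ((1/2) * (a3 - b3) + (a4 - b4))) := by ring
  rw [e]
  have h1 := abs_add_le (a1 - b1) ((a2 - b2) + ((1/2) * (a3 - b3) + (a4 - b4)))
  have h2 := abs_add_le (a2 - b2) ((1/2) * (a3 - b3) + (a4 - b4))
  have h3 := abs_add_le ((1/2) * (a3 - b3)) (a4 - b4)
  have h4 : |(1/2 : ℝ) * (a3 - b3)| = (1/2) * |a3 - b3| := by
    rw [abs_mul]; norm_num
  linarith

/-- **Spatial-increment bound for `L` in Case 2 (proof of Lemma 4.6).**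
In the Case-2 setting (where `σ` depends on `z` but not on the control), the function
`L(s,x,y,z,u) = ∂φ/∂s + ⟨D_xφ, b⟩ + ½ tr(σσᵀ D²_xφ) + f` (with arguments shifted by `φ`)
satisfies `|L(s,x,y,z,u) - L(s,x',y,z,u)| ≤ C (1 + ‖x'‖² + |y|² + ‖z‖²)(‖x - x'‖ + ‖x - x'‖²)`.
Dimensions `n ≥ 1` and `d ≥ 1` are encoded as `n + 1` and `d + 1`; the matrix `σ` is encoded
via its rows `σ s x y z i ∈ ℝ^d`. -/
theorem case2_L_spatial_increment
    (n d : ℕ) (T K L M : ℝ)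
    (hT : 0 < T) (hK : 0 ≤ K) (hL : 0 ≤ L) (hM : 0 ≤ M)
    (U : Type*) [MetricSpace U] [CompactSpace U]
    (b : ℝ → EuclideanSpace ℝ (Fin (n + 1)) → ℝ → EuclideanSpace ℝ (Fin (d + 1)) → U →
      EuclideanSpace ℝ (Fin (n + 1)))
    (f : ℝ → EuclideanSpace ℝ (Fin (n + 1)) → ℝ → EuclideanSpace ℝ (Fin (d + 1)) → U → ℝ)
    (σ : ℝ → EuclideanSpace ℝ (Fin (n + 1)) → ℝ → EuclideanSpace ℝ (Fin (d + 1)) →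
      Fin (n + 1) → EuclideanSpace ℝ (Fin (d + 1)))
    (φ : ℝ → EuclideanSpace ℝ (Fin (n + 1)) → ℝ)
    (𝓛 : ℝ → EuclideanSpace ℝ (Fin (n + 1)) → ℝ → EuclideanSpace ℝ (Fin (d + 1)) → U → ℝ)
    (hbLip : ∀ t ∈ Set.Icc (0 : ℝ) T, ∀ x x' y y' z z' u,
      ‖b t x y z u - b t x' y' z' u‖ ≤ K * (‖x - x'‖ + |y - y'| + ‖z - z'‖))
    (hbGrowth : ∀ t ∈ Set.Icc (0 : ℝ) T, ∀ x y z u,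
      ‖b t x y z u‖ ≤ L * (1 + ‖x‖ + |y| + ‖z‖))
    (hfLip : ∀ t ∈ Set.Icc (0 : ℝ) T, ∀ x x' y y' z z' u,
      |f t x y z u - f t x' y' z' u| ≤ K * (‖x - x'‖ + |y - y'| + ‖z - z'‖))
    (hfGrowth : ∀ t ∈ Set.Icc (0 : ℝ) T, ∀ x y z u,
      |f t x y z u| ≤ L * (1 + ‖x‖ + |y| + ‖z‖))
    (hσLip : ∀ t ∈ Set.Icc (0 : ℝ) T, ∀ x x' y y' z z',
      ‖σ t x y z - σ t x' y' z'‖ ≤ K * (‖x - x'‖ + |y - y'| + ‖z - z'‖))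
    (hσGrowth : ∀ t ∈ Set.Icc (0 : ℝ) T, ∀ x y z,
      ‖σ t x y z‖ ≤ L * (1 + ‖x‖ + |y| + ‖z‖))
    (hφ : ContDiff ℝ 3 (fun p : ℝ × EuclideanSpace ℝ (Fin (n + 1)) => φ p.1 p.2))
    (hφBound : ∀ i : ℕ, 1 ≤ i → i ≤ 3 →
      ∀ p : ℝ × EuclideanSpace ℝ (Fin (n + 1)),
        ‖iteratedFDeriv ℝ i (fun q : ℝ × EuclideanSpace ℝ (Fin (n + 1)) => φ q.1 q.2) p‖ ≤ M)
    (h𝓛 : ∀ s x y z u, 𝓛 s x y z u =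
      deriv (fun t => φ t x) s
      + ∑ i : Fin (n + 1),
          fderiv ℝ (φ s) x (EuclideanSpace.single i 1) * b s x (y + φ s x) z u i
      + (1 / 2) * ∑ i : Fin (n + 1), ∑ j : Fin (n + 1),
          ⟪σ s x (y + φ s x) z i, σ s x (y + φ s x) z j⟫ *
            fderiv ℝ (fun v => fderiv ℝ (φ s) v (EuclideanSpace.single j 1)) x
              (EuclideanSpace.single i 1)
      + f s x (y + φ s x) z u) :
    ∃ C : ℝ, 0 < C ∧ ∀ s ∈ Set.Icc (0 : ℝ) T,
      ∀ (u : U) (x x' : EuclideanSpace ℝ (Fin (n + 1))) (y : ℝ)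
        (z : EuclideanSpace ℝ (Fin (d + 1))),
      |𝓛 s x y z u - 𝓛 s x' y z u| ≤
        C * (1 + ‖x'‖ ^ 2 + |y| ^ 2 + ‖z‖ ^ 2) * (‖x - x'‖ + ‖x - x'‖ ^ 2) := by
  classical
  have hφ' : ContDiff ℝ 3 (PhiFun φ) := hφ
  have hB1 : ∀ p, ‖iteratedFDeriv ℝ 1 (PhiFun φ) p‖ ≤ M :=
    fun p => hφBound 1 le_rfl (by norm_num) p
  have hB2 : ∀ p, ‖iteratedFDeriv ℝ 2 (PhiFun φ) p‖ ≤ M :=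
    fun p => hφBound 2 (by norm_num) (by norm_num) p
  have hB3 : ∀ p, ‖iteratedFDeriv ℝ 3 (PhiFun φ) p‖ ≤ M :=
    fun p => hφBound 3 (by norm_num) le_rfl p
  -- bound for |φ s 0| on the compact interval
  have hcont : Continuous (fun s : ℝ => φ s 0) := by
    have h := hφ'.continuous.comp
      (continuous_id.prodMk (continuous_const (y := (0 : EuclideanSpace ℝ (Fin (n + 1))))))
    simpa [Function.comp_def, PhiFun] using h
  obtain ⟨S₀, hS₀⟩ := (isCompact_Icc (a := (0 : ℝ)) (b := T)).exists_bound_of_continuousOn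
    hcont.continuousOn
  set S : ℝ := max S₀ 0 with hSdef
  have hS0 : 0 ≤ S := le_max_right _ _
  have hS : ∀ s ∈ Set.Icc (0 : ℝ) T, |φ s 0| ≤ S := by
    intro s hs
    have := hS₀ s hs
    rw [Real.norm_eq_abs] at this
    exact this.trans (le_max_left _ _)
  -- norm of pairs differing in the second coordinate
  have hnp : ∀ (s : ℝ) (x x' : EuclideanSpace ℝ (Fin (n + 1))),
      ‖((s, x) : ℝ × EuclideanSpace ℝ (Fin (n + 1))) - (s, x')‖ = ‖x - x'‖ := by
    intro s x x'
    have h : ((s, x) : ℝ × EuclideanSpace ℝ (Fin (n + 1))) - (s, x')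
        = ((0 : ℝ), x - x') := by
      ext <;> simp
    rw [h, Prod.norm_def]
    simp
  have hφLip : ∀ (s : ℝ) (x x' : EuclideanSpace ℝ (Fin (n + 1))),
      |φ s x - φ s x'| ≤ M * ‖x - x'‖ := by
    intro s x x'
    have h := phi_lip hφ' hB1 (s, x) (s, x')
    rw [hnp] at h
    simpa [PhiFun] using h
  have hφgrow : ∀ s ∈ Set.Icc (0 : ℝ) T, ∀ x : EuclideanSpace ℝ (Fin (n + 1)),
      |φ s x| ≤ S + M * ‖x‖ := by
    intro s hs x
    have h1 := hφLip s x 0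
    rw [sub_zero] at h1
    have h2 := hS s hs
    have e : φ s x = (φ s x - φ s 0) + φ s 0 := by ring
    calc |φ s x| = |(φ s x - φ s 0) + φ s 0| := by rw [← e]
      _ ≤ |φ s x - φ s 0| + |φ s 0| := abs_add_le _ _
      _ ≤ M * ‖x‖ + S := add_le_add h1 h2
      _ = S + M * ‖x‖ := by ring
  -- time-derivative spatial increment
  have hpt : ∀ (s : ℝ) (x x' : EuclideanSpace ℝ (Fin (n + 1))),
      |deriv (fun t => φ t x) s - deriv (fun t => φ t x') s| ≤ M * ‖x - x'‖ := by
    intro s x x'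
    rw [partial_t hφ', partial_t hφ']
    have h := phiD1_lip hφ' hB2 (s, x) (s, x')
    rw [hnp] at h
    have h1 : ‖((1 : ℝ), (0 : EuclideanSpace ℝ (Fin (n + 1))))‖ = 1 := by
      simp [Prod.norm_def]
    calc |fderiv ℝ (PhiFun φ) (s, x) (1, 0) - fderiv ℝ (PhiFun φ) (s, x') (1, 0)|
        = |(fderiv ℝ (PhiFun φ) (s, x) - fderiv ℝ (PhiFun φ) (s, x'))
            ((1 : ℝ), (0 : EuclideanSpace ℝ (Fin (n + 1))))| := by
          rw [ContinuousLinearMap.sub_apply]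
      _ ≤ ‖fderiv ℝ (PhiFun φ) (s, x) - fderiv ℝ (PhiFun φ) (s, x')‖
            * ‖((1 : ℝ), (0 : EuclideanSpace ℝ (Fin (n + 1))))‖ := by
          rw [← Real.norm_eq_abs]; exact ContinuousLinearMap.le_opNorm _ _
      _ = ‖fderiv ℝ (PhiFun φ) (s, x) - fderiv ℝ (PhiFun φ) (s, x')‖ := by
          rw [h1, mul_one]
      _ ≤ M * ‖x - x'‖ := h
  -- first space derivative: bound and Lipschitz
  have hsingle : ∀ i : Fin (n + 1),
      ‖(((0 : ℝ), EuclideanSpace.single i (1 : ℝ)) :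
        ℝ × EuclideanSpace ℝ (Fin (n + 1)))‖ = 1 := by
    intro i
    simp [Prod.norm_def, EuclideanSpace.norm_single]
  have hgb : ∀ (s : ℝ) (x : EuclideanSpace ℝ (Fin (n + 1))) (i : Fin (n + 1)),
      |fderiv ℝ (φ s) x (EuclideanSpace.single i 1)| ≤ M := by
    intro s x i
    rw [partial_x hφ']
    calc |fderiv ℝ (PhiFun φ) (s, x) ((0 : ℝ), EuclideanSpace.single i 1)|
        ≤ ‖fderiv ℝ (PhiFun φ) (s, x)‖
            * ‖(((0 : ℝ), EuclideanSpace.single i (1 : ℝ)) :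
              ℝ × EuclideanSpace ℝ (Fin (n + 1)))‖ := by
          rw [← Real.norm_eq_abs]; exact ContinuousLinearMap.le_opNorm _ _
      _ = ‖fderiv ℝ (PhiFun φ) (s, x)‖ := by rw [hsingle, mul_one]
      _ ≤ M := phiD1_bound hB1 _
  have hgl : ∀ (s : ℝ) (x x' : EuclideanSpace ℝ (Fin (n + 1))) (i : Fin (n + 1)),
      |fderiv ℝ (φ s) x (EuclideanSpace.single i 1)
        - fderiv ℝ (φ s) x' (EuclideanSpace.single i 1)| ≤ M * ‖x - x'‖ := by
    intro s x x' i
    rw [partial_x hφ', partial_x hφ']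
    have h := phiD1_lip hφ' hB2 (s, x) (s, x')
    rw [hnp] at h
    calc |fderiv ℝ (PhiFun φ) (s, x) ((0 : ℝ), EuclideanSpace.single i 1)
          - fderiv ℝ (PhiFun φ) (s, x') ((0 : ℝ), EuclideanSpace.single i 1)|
        = |(fderiv ℝ (PhiFun φ) (s, x) - fderiv ℝ (PhiFun φ) (s, x'))
            ((0 : ℝ), EuclideanSpace.single i 1)| := by
          rw [ContinuousLinearMap.sub_apply]
      _ ≤ ‖fderiv ℝ (PhiFun φ) (s, x) - fderiv ℝ (PhiFun φ) (s, x')‖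
            * ‖(((0 : ℝ), EuclideanSpace.single i (1 : ℝ)) :
              ℝ × EuclideanSpace ℝ (Fin (n + 1)))‖ := by
          rw [← Real.norm_eq_abs]; exact ContinuousLinearMap.le_opNorm _ _
      _ = ‖fderiv ℝ (PhiFun φ) (s, x) - fderiv ℝ (PhiFun φ) (s, x')‖ := by
          rw [hsingle, mul_one]
      _ ≤ M * ‖x - x'‖ := h
  -- second space derivative: bound and Lipschitz
  have hA : ∀ (s : ℝ) (x : EuclideanSpace ℝ (Fin (n + 1))) (i j : Fin (n + 1)),
      |fderiv ℝ (fun v => fderiv ℝ (φ s) v (EuclideanSpace.single j 1)) x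
        (EuclideanSpace.single i 1)| ≤ M := by
    intro s x i j
    rw [partial_xx hφ']
    calc |fderiv ℝ (fderiv ℝ (PhiFun φ)) (s, x) ((0 : ℝ), EuclideanSpace.single i 1)
          ((0 : ℝ), EuclideanSpace.single j 1)|
        ≤ ‖fderiv ℝ (fderiv ℝ (PhiFun φ)) (s, x) ((0 : ℝ), EuclideanSpace.single i 1)‖
            * ‖(((0 : ℝ), EuclideanSpace.single j (1 : ℝ)) :
              ℝ × EuclideanSpace ℝ (Fin (n + 1)))‖ := by
          rw [← Real.norm_eq_abs]; exact ContinuousLinearMap.le_opNorm _ _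
      _ = ‖fderiv ℝ (fderiv ℝ (PhiFun φ)) (s, x) ((0 : ℝ), EuclideanSpace.single i 1)‖ := by
          rw [hsingle, mul_one]
      _ ≤ ‖fderiv ℝ (fderiv ℝ (PhiFun φ)) (s, x)‖
            * ‖(((0 : ℝ), EuclideanSpace.single i (1 : ℝ)) :
              ℝ × EuclideanSpace ℝ (Fin (n + 1)))‖ := ContinuousLinearMap.le_opNorm _ _
      _ = ‖fderiv ℝ (fderiv ℝ (PhiFun φ)) (s, x)‖ := by rw [hsingle, mul_one]
      _ ≤ M := phiD2_bound hB2 _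
  have hAl : ∀ (s : ℝ) (x x' : EuclideanSpace ℝ (Fin (n + 1))) (i j : Fin (n + 1)),
      |fderiv ℝ (fun v => fderiv ℝ (φ s) v (EuclideanSpace.single j 1)) x
          (EuclideanSpace.single i 1)
        - fderiv ℝ (fun v => fderiv ℝ (φ s) v (EuclideanSpace.single j 1)) x'
          (EuclideanSpace.single i 1)| ≤ M * ‖x - x'‖ := by
    intro s x x' i j
    rw [partial_xx hφ', partial_xx hφ']
    have h := phiD2_lip hφ' hB3 (s, x) (s, x')
    rw [hnp] at h
    calc |fderiv ℝ (fderiv ℝ (PhiFun φ)) (s, x) ((0 : ℝ), EuclideanSpace.single i 1)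
          ((0 : ℝ), EuclideanSpace.single j 1)
        - fderiv ℝ (fderiv ℝ (PhiFun φ)) (s, x') ((0 : ℝ), EuclideanSpace.single i 1)
          ((0 : ℝ), EuclideanSpace.single j 1)|
        = |((fderiv ℝ (fderiv ℝ (PhiFun φ)) (s, x)
              - fderiv ℝ (fderiv ℝ (PhiFun φ)) (s, x')) ((0 : ℝ), EuclideanSpace.single i 1))
            ((0 : ℝ), EuclideanSpace.single j 1)| := by
          rw [ContinuousLinearMap.sub_apply, ContinuousLinearMap.sub_apply]
      _ ≤ ‖(fderiv ℝ (fderiv ℝ (PhiFun φ)) (s, x)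
              - fderiv ℝ (fderiv ℝ (PhiFun φ)) (s, x')) ((0 : ℝ), EuclideanSpace.single i 1)‖
            * ‖(((0 : ℝ), EuclideanSpace.single j (1 : ℝ)) :
              ℝ × EuclideanSpace ℝ (Fin (n + 1)))‖ := by
          rw [← Real.norm_eq_abs]; exact ContinuousLinearMap.le_opNorm _ _
      _ ≤ ‖fderiv ℝ (fderiv ℝ (PhiFun φ)) (s, x) - fderiv ℝ (fderiv ℝ (PhiFun φ)) (s, x')‖
            * ‖(((0 : ℝ), EuclideanSpace.single i (1 : ℝ)) :
              ℝ × EuclideanSpace ℝ (Fin (n + 1)))‖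
            * ‖(((0 : ℝ), EuclideanSpace.single j (1 : ℝ)) :
              ℝ × EuclideanSpace ℝ (Fin (n + 1)))‖ := by
          refine mul_le_mul_of_nonneg_right ?_ (norm_nonneg _)
          exact ContinuousLinearMap.le_opNorm _ _
      _ = ‖fderiv ℝ (fderiv ℝ (PhiFun φ)) (s, x) - fderiv ℝ (fderiv ℝ (PhiFun φ)) (s, x')‖ := by
          rw [hsingle, hsingle, mul_one, mul_one]
      _ ≤ M * ‖x - x'‖ := h
  -- the constant
  refine ⟨M + ((n : ℝ) + 1) * (M * (L * (1 + S + M)) * 5 + M * (K * (1 + M)))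
      + (1/2) * ((n : ℝ) + 1)^2
          * (9 * (K * (1 + M) * (M * (L * (1 + S + M)))) + 4 * (M * (L * (1 + S + M))^2))
      + K * (1 + M) + 1, ?_, ?_⟩
  · have hn : (0:ℝ) ≤ (n : ℝ) + 1 := by positivity
    have a0 : (0:ℝ) ≤ 1 + S + M := by linarith
    have a1 : (0:ℝ) ≤ M * (L * (1 + S + M)) := mul_nonneg hM (mul_nonneg hL a0)
    have a2 : (0:ℝ) ≤ K * (1 + M) := mul_nonneg hK (by linarith)
    have a3 : (0:ℝ) ≤ M * (K * (1 + M)) := mul_nonneg hM a2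
    have a4 : (0:ℝ) ≤ K * (1 + M) * (M * (L * (1 + S + M))) := mul_nonneg a2 a1
    have a5 : (0:ℝ) ≤ M * (L * (1 + S + M))^2 := mul_nonneg hM (sq_nonneg _)
    have a6 : (0:ℝ) ≤ ((n : ℝ) + 1) * (M * (L * (1 + S + M)) * 5 + M * (K * (1 + M))) :=
      mul_nonneg hn (by linarith)
    have a7 : (0:ℝ) ≤ (1/2) * ((n : ℝ) + 1)^2
        * (9 * (K * (1 + M) * (M * (L * (1 + S + M)))) + 4 * (M * (L * (1 + S + M))^2)) :=
      mul_nonneg (mul_nonneg (by norm_num) (sq_nonneg _)) (by linarith)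
    linarith
  intro s hs u x x' y z
  have hr0 : (0:ℝ) ≤ ‖x - x'‖ := norm_nonneg _
  have hxb : ‖x‖ ≤ ‖x'‖ + ‖x - x'‖ := by
    calc ‖x‖ = ‖x' + (x - x')‖ := by rw [show x' + (x - x') = x by abel]
      _ ≤ ‖x'‖ + ‖x - x'‖ := norm_add_le _ _
  have hyx : |y + φ s x| ≤ |y| + (S + M * ‖x‖) := by
    have h1 := hφgrow s hs x
    have h2 := abs_add_le y (φ s x)
    linarith
  have hyx' : |y + φ s x'| ≤ |y| + (S + M * ‖x'‖) := by
    have h1 := hφgrow s hs x'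
    have h2 := abs_add_le y (φ s x')
    linarith
  set W : ℝ := L * (1 + S + M) * (1 + ‖x'‖ + |y| + ‖z‖ + ‖x - x'‖) with hWdef
  set W' : ℝ := L * (1 + S + M) * (1 + ‖x'‖ + |y| + ‖z‖) with hW'def
  have hgen : ∀ v : ℝ, |y + v| ≤ |y| + (S + M * ‖x‖) →
      L * (1 + ‖x‖ + |y + v| + ‖z‖) ≤ W := by
    intro v hv
    have h2 := mul_le_mul_of_nonneg_left hxb hM
    have h1 : 1 + ‖x‖ + |y + v| + ‖z‖
        ≤ (1 + S + M) * (1 + ‖x'‖ + |y| + ‖z‖ + ‖x - x'‖) := by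
      nlinarith only [mul_nonneg hS0 (norm_nonneg x'), mul_nonneg hS0 (abs_nonneg y),
        mul_nonneg hS0 (norm_nonneg z), mul_nonneg hS0 hr0,
        mul_nonneg hM (abs_nonneg y), mul_nonneg hM (norm_nonneg z), hv, h2, hxb, hS0, hM,
        hL, hr0, norm_nonneg x', abs_nonneg y, norm_nonneg z, abs_nonneg (y + v)]
    calc L * (1 + ‖x‖ + |y + v| + ‖z‖)
        ≤ L * ((1 + S + M) * (1 + ‖x'‖ + |y| + ‖z‖ + ‖x - x'‖)) :=
          mul_le_mul_of_nonneg_left h1 hL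
      _ = W := by rw [hWdef]; ring
  have hgen' : L * (1 + ‖x'‖ + |y + φ s x'| + ‖z‖) ≤ W' := by
    have h1 : 1 + ‖x'‖ + |y + φ s x'| + ‖z‖
        ≤ (1 + S + M) * (1 + ‖x'‖ + |y| + ‖z‖) := by
      nlinarith only [mul_nonneg hS0 (norm_nonneg x'), mul_nonneg hS0 (abs_nonneg y),
        mul_nonneg hS0 (norm_nonneg z), mul_nonneg hM (abs_nonneg y),
        mul_nonneg hM (norm_nonneg z), mul_nonneg hM (norm_nonneg x'), hyx', hS0, hM,
        norm_nonneg x', abs_nonneg y, norm_nonneg z]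
    calc L * (1 + ‖x'‖ + |y + φ s x'| + ‖z‖)
        ≤ L * ((1 + S + M) * (1 + ‖x'‖ + |y| + ‖z‖)) := mul_le_mul_of_nonneg_left h1 hL
      _ = W' := by rw [hW'def]; ring
  have hBW : ‖b s x (y + φ s x) z u‖ ≤ W :=
    (hbGrowth s hs x (y + φ s x) z u).trans (hgen (φ s x) hyx)
  have hSW : ‖σ s x (y + φ s x) z‖ ≤ W :=
    (hσGrowth s hs x (y + φ s x) z).trans (hgen (φ s x) hyx)
  have hSW' : ‖σ s x' (y + φ s x') z‖ ≤ W' :=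
    (hσGrowth s hs x' (y + φ s x') z).trans hgen'
  have e2 : (y + φ s x) - (y + φ s x') = φ s x - φ s x' := by ring
  have hlip2 : K * (‖x - x'‖ + |φ s x - φ s x'| + ‖z - z‖) ≤ K * (1 + M) * ‖x - x'‖ := by
    rw [sub_self, norm_zero]
    calc K * (‖x - x'‖ + |φ s x - φ s x'| + 0)
        ≤ K * (‖x - x'‖ + M * ‖x - x'‖ + 0) :=
          mul_le_mul_of_nonneg_left (by linarith [hφLip s x x']) hK
      _ = K * (1 + M) * ‖x - x'‖ := by ring
  have hBd : ‖b s x (y + φ s x) z u - b s x' (y + φ s x') z u‖ ≤ K * (1 + M) * ‖x - x'‖ := by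
    have h := hbLip s hs x x' (y + φ s x) (y + φ s x') z z u
    rw [e2] at h
    exact h.trans hlip2
  have hSd : ‖σ s x (y + φ s x) z - σ s x' (y + φ s x') z‖ ≤ K * (1 + M) * ‖x - x'‖ := by
    have h := hσLip s hs x x' (y + φ s x) (y + φ s x') z z
    rw [e2] at h
    exact h.trans hlip2
  have hfd : |f s x (y + φ s x) z u - f s x' (y + φ s x') z u| ≤ K * (1 + M) * ‖x - x'‖ := by
    have h := hfLip s hs x x' (y + φ s x) (y + φ s x') z z u
    rw [e2] at h
    exact h.trans hlip2
  -- nonnegativity facts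
  have hn : (0:ℝ) ≤ (n : ℝ) + 1 := by positivity
  have a0 : (0:ℝ) ≤ 1 + S + M := by linarith
  have a1 : (0:ℝ) ≤ M * (L * (1 + S + M)) := mul_nonneg hM (mul_nonneg hL a0)
  have a2 : (0:ℝ) ≤ K * (1 + M) := mul_nonneg hK (by linarith)
  have a2r : (0:ℝ) ≤ K * (1 + M) * ‖x - x'‖ := mul_nonneg a2 hr0
  have a3 : (0:ℝ) ≤ M * (K * (1 + M)) := mul_nonneg hM a2
  have a4 : (0:ℝ) ≤ K * (1 + M) * (M * (L * (1 + S + M))) := mul_nonneg a2 a1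
  have a5 : (0:ℝ) ≤ M * (L * (1 + S + M))^2 := mul_nonneg hM (sq_nonneg _)
  have hW'0 : (0:ℝ) ≤ W' := by
    rw [hW'def]
    have : (0:ℝ) ≤ 1 + ‖x'‖ + |y| + ‖z‖ := by positivity
    exact mul_nonneg (mul_nonneg hL a0) this
  -- row and coordinate bounds
  have hrowW : ∀ i, ‖σ s x (y + φ s x) z i‖ ≤ W := fun i =>
    (norm_le_pi_norm _ i).trans hSW
  have hrowW' : ∀ i, ‖σ s x' (y + φ s x') z i‖ ≤ W' := fun i =>
    (norm_le_pi_norm _ i).trans hSW'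
  have hrowd : ∀ i, ‖σ s x (y + φ s x) z i - σ s x' (y + φ s x') z i‖
      ≤ K * (1 + M) * ‖x - x'‖ := by
    intro i
    have e : σ s x (y + φ s x) z i - σ s x' (y + φ s x') z i
        = (σ s x (y + φ s x) z - σ s x' (y + φ s x') z) i := rfl
    rw [e]
    exact (norm_le_pi_norm _ i).trans hSd
  have hBcd : ∀ i, |b s x (y + φ s x) z u i - b s x' (y + φ s x') z u i|
      ≤ K * (1 + M) * ‖x - x'‖ := by
    intro i
    have e : b s x (y + φ s x) z u i - b s x' (y + φ s x') z u i
        = (b s x (y + φ s x) z u - b s x' (y + φ s x') z u) i := rfl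
    rw [e]
    exact (coord_abs_le_norm _ i).trans hBd
  -- second term bound
  have hΔ2 : |(∑ i : Fin (n + 1),
        fderiv ℝ (φ s) x (EuclideanSpace.single i 1) * b s x (y + φ s x) z u i)
      - ∑ i : Fin (n + 1),
        fderiv ℝ (φ s) x' (EuclideanSpace.single i 1) * b s x' (y + φ s x') z u i|
      ≤ ((n : ℝ) + 1) * (M * ‖x - x'‖ * W + M * (K * (1 + M) * ‖x - x'‖)) := by
    have h := abs_sum_sub_sum_le
      (fun i => fderiv ℝ (φ s) x (EuclideanSpace.single i 1) * b s x (y + φ s x) z u i)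
      (fun i => fderiv ℝ (φ s) x' (EuclideanSpace.single i 1) * b s x' (y + φ s x') z u i)
      (fun i => prod_diff_bound (hgl s x x' i) ((coord_abs_le_norm _ i).trans hBW)
        (hgb s x' i) (hBcd i))
    push_cast at h
    exact h
  -- third term bound
  have haij : ∀ i j, |⟪σ s x (y + φ s x) z i, σ s x (y + φ s x) z j⟫
        - ⟪σ s x' (y + φ s x') z i, σ s x' (y + φ s x') z j⟫|
      ≤ K * (1 + M) * ‖x - x'‖ * W + W' * (K * (1 + M) * ‖x - x'‖) := by
    intro i j
    refine (inner_diff_bound _ _ _ _).trans ?_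
    exact add_le_add (mul_le_mul (hrowd i) (hrowW j) (norm_nonneg _) a2r)
      (mul_le_mul (hrowW' i) (hrowd j) (norm_nonneg _) hW'0)
  have hinn' : ∀ i j, |⟪σ s x' (y + φ s x') z i, σ s x' (y + φ s x') z j⟫| ≤ W' * W' :=
    fun i j => (abs_real_inner_le_norm _ _).trans
      (mul_le_mul (hrowW' i) (hrowW' j) (norm_nonneg _) hW'0)
  have hΔ3 : |(∑ i : Fin (n + 1), ∑ j : Fin (n + 1),
        ⟪σ s x (y + φ s x) z i, σ s x (y + φ s x) z j⟫ *
          fderiv ℝ (fun v => fderiv ℝ (φ s) v (EuclideanSpace.single j 1)) x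
            (EuclideanSpace.single i 1))
      - ∑ i : Fin (n + 1), ∑ j : Fin (n + 1),
        ⟪σ s x' (y + φ s x') z i, σ s x' (y + φ s x') z j⟫ *
          fderiv ℝ (fun v => fderiv ℝ (φ s) v (EuclideanSpace.single j 1)) x'
            (EuclideanSpace.single i 1)|
      ≤ ((n : ℝ) + 1) * (((n : ℝ) + 1) *
          ((K * (1 + M) * ‖x - x'‖ * W + W' * (K * (1 + M) * ‖x - x'‖)) * M
            + (W' * W') * (M * ‖x - x'‖))) := by
    have hin : ∀ i : Fin (n + 1), |(∑ j : Fin (n + 1),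
          ⟪σ s x (y + φ s x) z i, σ s x (y + φ s x) z j⟫ *
            fderiv ℝ (fun v => fderiv ℝ (φ s) v (EuclideanSpace.single j 1)) x
              (EuclideanSpace.single i 1))
        - ∑ j : Fin (n + 1),
          ⟪σ s x' (y + φ s x') z i, σ s x' (y + φ s x') z j⟫ *
            fderiv ℝ (fun v => fderiv ℝ (φ s) v (EuclideanSpace.single j 1)) x'
              (EuclideanSpace.single i 1)|
        ≤ ((n : ℝ) + 1) *
            ((K * (1 + M) * ‖x - x'‖ * W + W' * (K * (1 + M) * ‖x - x'‖)) * M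
              + (W' * W') * (M * ‖x - x'‖)) := by
      intro i
      have h := abs_sum_sub_sum_le _ _
        (fun j => prod_diff_bound (haij i j) (hA s x i j) (hinn' i j) (hAl s x x' i j))
      push_cast at h
      exact h
    have h := abs_sum_sub_sum_le _ _ hin
    push_cast at h
    exact h
  -- core numeric inequalities
  have hq1 : (0:ℝ) ≤ ‖x'‖^2 + |y|^2 + ‖z‖^2 := by positivity
  have hQ0 : (0:ℝ) ≤ 1 + ‖x'‖^2 + |y|^2 + ‖z‖^2 := by positivity
  have hQR0 : (0:ℝ) ≤ (1 + ‖x'‖^2 + |y|^2 + ‖z‖^2) * (‖x - x'‖ + ‖x - x'‖^2) := by positivity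
  have hcr : ‖x - x'‖ ≤ (1 + ‖x'‖^2 + |y|^2 + ‖z‖^2) * (‖x - x'‖ + ‖x - x'‖^2) := by
    linarith only [mul_nonneg hq1 hr0, mul_nonneg hQ0 (sq_nonneg ‖x - x'‖)]
  have hcr2 : ‖x - x'‖^2 ≤ (1 + ‖x'‖^2 + |y|^2 + ‖z‖^2) * (‖x - x'‖ + ‖x - x'‖^2) := by
    linarith only [mul_nonneg hQ0 hr0, mul_nonneg hq1 (sq_nonneg ‖x - x'‖)]
  have hP4 : 1 + ‖x'‖ + |y| + ‖z‖ ≤ 4 * (1 + ‖x'‖^2 + |y|^2 + ‖z‖^2) := by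
    nlinarith only [sq_nonneg (‖x'‖ - 1), sq_nonneg (|y| - 1), sq_nonneg (‖z‖ - 1), hq1]
  have hPP : (1 + ‖x'‖ + |y| + ‖z‖)^2 ≤ 4 * (1 + ‖x'‖^2 + |y|^2 + ‖z‖^2) := by
    nlinarith only [sq_nonneg (‖x'‖ - 1), sq_nonneg (|y| - 1), sq_nonneg (‖z‖ - 1),
      sq_nonneg (‖x'‖ - |y|), sq_nonneg (‖x'‖ - ‖z‖), sq_nonneg (|y| - ‖z‖),
      norm_nonneg x', abs_nonneg y, norm_nonneg z]
  have hcPr : (1 + ‖x'‖ + |y| + ‖z‖) * ‖x - x'‖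
      ≤ 4 * ((1 + ‖x'‖^2 + |y|^2 + ‖z‖^2) * (‖x - x'‖ + ‖x - x'‖^2)) := by
    have t1 := mul_le_mul_of_nonneg_right hP4 hr0
    have t2 : (0:ℝ) ≤ (1 + ‖x'‖^2 + |y|^2 + ‖z‖^2) * ‖x - x'‖^2 :=
      mul_nonneg hQ0 (sq_nonneg _)
    linarith only [t1, t2]
  have hcP2r : (1 + ‖x'‖ + |y| + ‖z‖)^2 * ‖x - x'‖
      ≤ 4 * ((1 + ‖x'‖^2 + |y|^2 + ‖z‖^2) * (‖x - x'‖ + ‖x - x'‖^2)) := by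
    have t1 := mul_le_mul_of_nonneg_right hPP hr0
    have t2 : (0:ℝ) ≤ (1 + ‖x'‖^2 + |y|^2 + ‖z‖^2) * ‖x - x'‖^2 :=
      mul_nonneg hQ0 (sq_nonneg _)
    linarith only [t1, t2]
  -- bucket inequalities
  have m0 := mul_le_mul_of_nonneg_left hcr hM
  have m1 := mul_le_mul_of_nonneg_left hcPr a1
  have m2 := mul_le_mul_of_nonneg_left hcr2 a1
  have m3 := mul_le_mul_of_nonneg_left hcr a3
  have m4 := mul_le_mul_of_nonneg_left hcPr a4
  have m5 := mul_le_mul_of_nonneg_left hcr2 a4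
  have m6 := mul_le_mul_of_nonneg_left hcP2r a5
  have m7 := mul_le_mul_of_nonneg_left hcr a2
  have bucket2 : M * ‖x - x'‖ * W + M * (K * (1 + M) * ‖x - x'‖)
      ≤ (M * (L * (1 + S + M)) * 5 + M * (K * (1 + M)))
          * ((1 + ‖x'‖^2 + |y|^2 + ‖z‖^2) * (‖x - x'‖ + ‖x - x'‖^2)) := by
    rw [hWdef]
    linarith only [m1, m2, m3]
  have bucket3 : (K * (1 + M) * ‖x - x'‖ * W + W' * (K * (1 + M) * ‖x - x'‖)) * M
        + (W' * W') * (M * ‖x - x'‖)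
      ≤ (9 * (K * (1 + M) * (M * (L * (1 + S + M)))) + 4 * (M * (L * (1 + S + M))^2))
          * ((1 + ‖x'‖^2 + |y|^2 + ‖z‖^2) * (‖x - x'‖ + ‖x - x'‖^2)) := by
    rw [hWdef, hW'def]
    linarith only [m4, m5, m6]
  have bucket2' := mul_le_mul_of_nonneg_left bucket2 hn
  have hhalf : (0:ℝ) ≤ (1/2) * ((n : ℝ) + 1)^2 := by positivity
  -- final assembly
  rw [h𝓛 s x y z u, h𝓛 s x' y z u]
  refine (abs_split4 _ _ _ _ _ _ _ _).trans ?_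
  have h1 := hpt s x x'
  have h3 := mul_le_mul_of_nonneg_left hΔ3 (by norm_num : (0:ℝ) ≤ 1/2)
  have bucket3' := mul_le_mul_of_nonneg_left bucket3 hhalf
  linarith only [h1, hΔ2, h3, hfd, m0, m7, bucket2', bucket3', hQR0]
end
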